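/- arXiv:0806.0909 — 11 statements merged into one kernel-verified Lean document; each statement's English description precedes it below -/
import Mathlib

section
/- For every ξ > 0 the strict inequalities exp(−ξ) < 1/(1+ξ) < 1 − exp(−1/ξ) hold. Consequently, in the single-interferer network the spatial contentions satisfy γ^{0/1} < γ^{1/1} < γ^{1/0}: fading in the desired link is harmful whereas fading in the interferer's channel is helpful. -/
/-- For every `ξ > 0`, `exp (-ξ) < 1 / (1 + ξ) < 1 - exp (-1/ξ)`; that is, the spatial
contentions of the single-interferer network satisfy `γ^{0/1} < γ^{1/1} < γ^{1/0}`. -/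
theorem spatial_contention_ordering (ξ : ℝ) (hξ : 0 < ξ) :
    Real.exp (-ξ) < 1 / (1 + ξ) ∧ 1 / (1 + ξ) < 1 - Real.exp (-(1 / ξ)) := by
  have h1 : (1 : ℝ) + ξ < Real.exp ξ := by
    have := Real.add_one_lt_exp (ne_of_gt hξ)
    linarith
  have h2 : (1 : ℝ) + 1 / ξ < Real.exp (1 / ξ) := by
    have := Real.add_one_lt_exp (ne_of_gt (one_div_pos.mpr hξ))
    linarith
  have hpos : (0 : ℝ) < 1 + ξ := by linarith
  constructor
  · rw [Real.exp_neg, one_div]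
    gcongr
  · rw [Real.exp_neg]
    have he : 0 < Real.exp (1 / ξ) := Real.exp_pos _
    have hinv : Real.exp (1 / ξ) * (Real.exp (1 / ξ))⁻¹ = 1 :=
      mul_inv_cancel₀ (ne_of_gt he)
    rw [div_lt_iff₀ hpos]
    have hmul : (1 + 1 / ξ) * ξ = ξ + 1 := by field_simp
    nlinarith [mul_lt_mul_of_pos_right h2 hξ,
      mul_pos (inv_pos.mpr he) hpos,
      mul_lt_mul_of_pos_right h2 (mul_pos (inv_pos.mpr he) hξ)]
end

section
/- For real α > 2 and θ > 0, the improper Riemann integral ∫₀^∞ 2πr·(1 − exp(−θ r^{−α})) dr equals π Γ(1 − 2/α) θ^{2/α}, where Γ is the Gamma function. Consequently, in a two-dimensional Poisson network where only the desired link fades (non-fading interferers), p_s^{1/0} = exp(−p π Γ(1−2/α) θ^{2/α}), and the spatial contention π Γ(1−2/α) θ^{2/α} exceeds that of the fully Rayleigh-fading case. -/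
open MeasureTheory Set Real Filter Topology

private lemma gamma_one_add_lt_one {s : ℝ} (h0 : 0 < s) (h1 : s < 1) :
    Real.Gamma (1 + s) < 1 := by
  rcases le_or_gt (1 + s) (3 / 2) with h | h
  · have key := Real.convexOn_Gamma.2 (mem_Ioi.mpr one_pos)
      (mem_Ioi.mpr (by norm_num : (0:ℝ) < 3/2)) (by linarith : (0:ℝ) ≤ 1 - 2*s)
      (by linarith : (0:ℝ) ≤ 2*s) (by ring : (1 - 2*s) + 2*s = 1)
    simp only [smul_eq_mul] at key
    rw [show (1 - 2*s)*1 + 2*s*(3/2 : ℝ) = 1 + s by ring, Real.Gamma_one] at key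
    nlinarith [Real.Gamma_three_div_two_lt_one]
  · have key := Real.convexOn_Gamma.2 (mem_Ioi.mpr (by norm_num : (0:ℝ) < 3/2))
      (mem_Ioi.mpr (by norm_num : (0:ℝ) < 2)) (by linarith : (0:ℝ) ≤ 2 - 2*s)
      (by linarith : (0:ℝ) ≤ 2*s - 1) (by ring : (2 - 2*s) + (2*s - 1) = 1)
    simp only [smul_eq_mul] at key
    rw [show (2 - 2*s)*(3/2 : ℝ) + (2*s - 1)*2 = 1 + s by ring, Real.Gamma_two] at key
    nlinarith [Real.Gamma_three_div_two_lt_one]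

/-- For `α > 2` and `θ > 0`, `∫₀^∞ 2πr (1 - exp (-θ r^{-α})) dr = π Γ(1 - 2/α) θ^(2/α)`.
Consequently, in a two-dimensional Poisson network where only the desired link fades,
`p_s^{1/0} = exp (-p π Γ(1-2/α) θ^(2/α))`, and the spatial contention `π Γ(1-2/α) θ^(2/α)`
exceeds that `θ^(2/α) (2π²/α) csc (2π/α)` of the fully Rayleigh-fading case. -/
theorem twoD_poisson_partial_fading (α θ : ℝ) (hα : 2 < α) (hθ : 0 < θ) :
    (∫ r in Ioi (0 : ℝ), 2 * π * r * (1 - Real.exp (-(θ * r ^ (-α))))) =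
      π * Real.Gamma (1 - 2 / α) * θ ^ (2 / α) ∧
    (∀ p : ℝ, Real.exp (-(p * ∫ r in Ioi (0 : ℝ),
        2 * π * r * (1 - Real.exp (-(θ * r ^ (-α)))))) =
      Real.exp (-(p * π * Real.Gamma (1 - 2 / α) * θ ^ (2 / α)))) ∧
    θ ^ (2 / α) * (2 * π ^ 2 / α) * (Real.sin (2 * π / α))⁻¹ <
      π * Real.Gamma (1 - 2 / α) * θ ^ (2 / α) := by
  have hmain : (∫ r in Ioi (0 : ℝ), 2 * π * r * (1 - Real.exp (-(θ * r ^ (-α))))) =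
      π * Real.Gamma (1 - 2 / α) * θ ^ (2 / α) := by
    have hα0 : 0 < α := by linarith
    have hs1 : 2 / α < 1 := by rw [div_lt_one hα0]; linarith
    set u : ℝ → ℝ := fun r => 1 - Real.exp (-(θ * r ^ (-α))) with hu_def
    set u' : ℝ → ℝ := fun r => -(θ * α * r ^ (-α - 1) * Real.exp (-(θ * r ^ (-α)))) with hu'_def
    set v : ℝ → ℝ := fun r => π * r ^ 2 with hv_def
    set v' : ℝ → ℝ := fun r => 2 * π * r with hv'_def
    -- derivatives
    have hderiv_u : ∀ r ∈ Ioi (0:ℝ), HasDerivAt u (u' r) r := by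
      intro r hr
      have h1 : HasDerivAt (fun r : ℝ => r ^ (-α)) (-α * r ^ (-α - 1)) r :=
        Real.hasDerivAt_rpow_const (Or.inl (ne_of_gt hr))
      have h4 := (((h1.const_mul θ).neg).exp).const_sub 1
      refine h4.congr_deriv ?_
      simp only [hu'_def, Pi.neg_apply]
      ring
    have hderiv_v : ∀ r ∈ Ioi (0:ℝ), HasDerivAt v (v' r) r := by
      intro r _
      have := (hasDerivAt_pow 2 r).const_mul π
      refine this.congr_deriv ?_
      simp [hv'_def]
      ring
    -- continuity facts
    have hcontE : ContinuousOn (fun r : ℝ => Real.exp (-(θ * r ^ (-α)))) (Ioi 0) := by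
      apply Real.continuous_exp.comp_continuousOn
      exact (continuousOn_const.mul (continuousOn_id.rpow_const fun x hx => Or.inl (ne_of_gt hx))).neg
    have hcontU : ContinuousOn u (Ioi 0) := continuousOn_const.sub hcontE
    have hcontUV' : ContinuousOn (fun r => u r * v' r) (Ioi 0) :=
      hcontU.mul (by fun_prop)
    have hcontU'V : ContinuousOn (fun r => u' r * v r) (Ioi 0) := by
      apply ContinuousOn.mul _ (by fun_prop)
      exact ((continuousOn_const.mul (continuousOn_id.rpow_const
        fun x hx => Or.inl (ne_of_gt hx))).mul hcontE).neg
    -- small facts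
    have hexp_le : ∀ x : ℝ, 1 - Real.exp (-x) ≤ x := fun x => by
      nlinarith [Real.add_one_le_exp (-x)]
    have hEpos : ∀ r : ℝ, 0 < Real.exp (-(θ * r ^ (-α))) := fun r => Real.exp_pos _
    have hE1 : ∀ r : ℝ, 0 < r → Real.exp (-(θ * r ^ (-α))) ≤ 1 := fun r hr => by
      rw [Real.exp_le_one_iff]
      have : 0 < r ^ (-α) := Real.rpow_pos_of_pos hr _
      nlinarith
    have hU0 : ∀ r : ℝ, 0 < r → 0 ≤ u r := fun r hr => by
      have := hE1 r hr; simp only [hu_def]; linarith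
    -- integrability of u * v'
    have hsplit : Ioc (0:ℝ) 1 ∪ Ioi 1 = Ioi 0 := Ioc_union_Ioi_eq_Ioi zero_le_one
    have huv' : IntegrableOn (fun r => u r * v' r) (Ioi 0) := by
      rw [← hsplit, integrableOn_union]
      constructor
      · apply Integrable.mono' (g := fun _ : ℝ => 2 * π)
          (integrableOn_const measure_Ioc_lt_top.ne)
          ((hcontUV'.mono Ioc_subset_Ioi_self).aestronglyMeasurable measurableSet_Ioc)
        rw [ae_restrict_iff' measurableSet_Ioc]
        refine ae_of_all _ fun x hx => ?_
        obtain ⟨hx0, hx1⟩ := hx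
        have h1 := hE1 x hx0
        have h2 := hEpos x
        rw [Real.norm_eq_abs, abs_of_nonneg (mul_nonneg (hU0 x hx0) (by positivity))]
        simp only [hu_def, hv'_def]
        calc (1 - Real.exp (-(θ * x ^ (-α)))) * (2 * π * x)
            ≤ 1 * (2 * π * x) := by
              apply mul_le_mul_of_nonneg_right (by linarith) (by positivity)
          _ = 2 * π * x := by ring
          _ ≤ 2 * π := by nlinarith [Real.pi_pos]
      · apply Integrable.mono' (g := fun x : ℝ => (2 * π * θ) * x ^ (1 - α))
          ((integrableOn_Ioi_rpow_of_lt (by linarith) one_pos).const_mul _)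
          ((hcontUV'.mono (Ioi_subset_Ioi zero_le_one)).aestronglyMeasurable measurableSet_Ioi)
        rw [ae_restrict_iff' measurableSet_Ioi]
        refine ae_of_all _ fun x hx => ?_
        have hx0 : (0:ℝ) < x := lt_trans one_pos hx
        have hle := hexp_le (θ * x ^ (-α))
        have hid : x ^ (-α) * x = x ^ (1 - α) := by
          nth_rewrite 2 [← Real.rpow_one x]
          rw [← Real.rpow_add hx0]; congr 1; ring
        rw [Real.norm_eq_abs, abs_of_nonneg (mul_nonneg (hU0 x hx0) (by positivity))]
        simp only [hu_def, hv'_def]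
        calc (1 - Real.exp (-(θ * x ^ (-α)))) * (2 * π * x)
            ≤ (θ * x ^ (-α)) * (2 * π * x) := by
              apply mul_le_mul_of_nonneg_right hle (by positivity)
          _ = 2 * π * θ * (x ^ (-α) * x) := by ring
          _ = 2 * π * θ * x ^ (1 - α) := by rw [hid]
    -- integrability of u' * v
    have hu'v : IntegrableOn (fun r => u' r * v r) (Ioi 0) := by
      rw [← hsplit, integrableOn_union]
      have hval : ∀ x : ℝ, 0 < x → u' x * v x
          = -(π * α * θ * (x ^ (1 - α) * Real.exp (-(θ * x ^ (-α))))) := by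
        intro x hx0
        have e1 : x ^ (-α - 1) * x ^ (2:ℕ) = x ^ (1 - α) := by
          rw [show (x:ℝ) ^ (2:ℕ) = x ^ ((2:ℕ):ℝ) from (Real.rpow_natCast x 2).symm,
            ← Real.rpow_add hx0]
          congr 1; push_cast; ring
        simp only [hu'_def, hv_def]
        linear_combination (-(π * α * θ * Real.exp (-(θ * x ^ (-α))))) * e1
      constructor
      · apply Integrable.mono' (g := fun _ : ℝ => π * α)
          (integrableOn_const measure_Ioc_lt_top.ne)
          ((hcontU'V.mono Ioc_subset_Ioi_self).aestronglyMeasurable measurableSet_Ioc)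
        rw [ae_restrict_iff' measurableSet_Ioc]
        refine ae_of_all _ fun x hx => ?_
        obtain ⟨hx0, hx1⟩ := hx
        have ht : 0 < θ * x ^ (-α) := by positivity
        have hexp_inv : Real.exp (-(θ * x ^ (-α))) ≤ θ⁻¹ * x ^ α := by
          rw [Real.exp_neg]
          have h1 : θ * x ^ (-α) ≤ Real.exp (θ * x ^ (-α)) := by
            nlinarith [Real.add_one_le_exp (θ * x ^ (-α))]
          calc (Real.exp (θ * x ^ (-α)))⁻¹ ≤ (θ * x ^ (-α))⁻¹ := by gcongr
            _ = θ⁻¹ * x ^ α := by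
                rw [mul_inv, ← Real.rpow_neg hx0.le, neg_neg]
        have hBC : x ^ (1 - α) * x ^ α = x := by
          rw [← Real.rpow_add hx0, show (1:ℝ) - α + α = 1 by ring, Real.rpow_one]
        rw [Real.norm_eq_abs, hval x hx0, abs_neg,
          abs_of_nonneg (by positivity)]
        calc π * α * θ * (x ^ (1 - α) * Real.exp (-(θ * x ^ (-α))))
            ≤ π * α * θ * (x ^ (1 - α) * (θ⁻¹ * x ^ α)) := by
              apply mul_le_mul_of_nonneg_left _ (by positivity)
              exact mul_le_mul_of_nonneg_left hexp_inv (by positivity)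
          _ = π * α * (θ * θ⁻¹) * (x ^ (1 - α) * x ^ α) := by ring
          _ = π * α * x := by rw [hBC, mul_inv_cancel₀ hθ.ne', mul_one]
          _ ≤ π * α := by nlinarith [mul_pos Real.pi_pos hα0]
      · apply Integrable.mono' (g := fun x : ℝ => (π * α * θ) * x ^ (1 - α))
          ((integrableOn_Ioi_rpow_of_lt (by linarith) one_pos).const_mul _)
          ((hcontU'V.mono (Ioi_subset_Ioi zero_le_one)).aestronglyMeasurable measurableSet_Ioi)
        rw [ae_restrict_iff' measurableSet_Ioi]
        refine ae_of_all _ fun x hx => ?_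
        have hx0 : (0:ℝ) < x := lt_trans one_pos hx
        rw [Real.norm_eq_abs, hval x hx0, abs_neg, abs_of_nonneg (by positivity)]
        calc π * α * θ * (x ^ (1 - α) * Real.exp (-(θ * x ^ (-α))))
            ≤ π * α * θ * (x ^ (1 - α) * 1) := by
              apply mul_le_mul_of_nonneg_left _ (by positivity)
              exact mul_le_mul_of_nonneg_left (hE1 x hx0) (by positivity)
          _ = π * α * θ * x ^ (1 - α) := by ring
    -- boundary limits
    have h_zero : Tendsto (fun r => u r * v r) (𝓝[>] (0:ℝ)) (𝓝 0) := by
      apply squeeze_zero' (eventually_nhdsWithin_of_forall fun r hr =>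
        mul_nonneg (hU0 r hr) (by simp only [hv_def]; positivity))
        (g := fun r => π * r ^ 2)
      · apply eventually_nhdsWithin_of_forall
        intro r hr
        have h2 := hEpos r
        have hr0 : (0:ℝ) < r := hr
        simp only [hu_def, hv_def]
        calc (1 - Real.exp (-(θ * r ^ (-α)))) * (π * r ^ 2)
            ≤ 1 * (π * r ^ 2) := by
              apply mul_le_mul_of_nonneg_right (by linarith) (by positivity)
          _ = π * r ^ 2 := one_mul _
      · have : Tendsto (fun r : ℝ => π * r ^ 2) (𝓝 0) (𝓝 (π * 0 ^ 2)) :=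
          (continuous_const.mul (continuous_pow 2)).tendsto 0
        simpa using this.mono_left nhdsWithin_le_nhds
    have h_infty : Tendsto (fun r => u r * v r) atTop (𝓝 0) := by
      apply squeeze_zero' (g := fun r => (π * θ) * r ^ (2 - α))
      · filter_upwards [eventually_gt_atTop (0:ℝ)] with r hr
        exact mul_nonneg (hU0 r hr) (by simp only [hv_def]; positivity)
      · filter_upwards [eventually_gt_atTop (0:ℝ)] with r hr
        have hle := hexp_le (θ * r ^ (-α))
        have hid : r ^ (-α) * r ^ (2:ℕ) = r ^ (2 - α) := by
          rw [show (r:ℝ) ^ (2:ℕ) = r ^ ((2:ℕ):ℝ) from (Real.rpow_natCast r 2).symm,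
            ← Real.rpow_add hr]
          congr 1; push_cast; ring
        simp only [hu_def, hv_def]
        calc (1 - Real.exp (-(θ * r ^ (-α)))) * (π * r ^ 2)
            ≤ (θ * r ^ (-α)) * (π * r ^ 2) := by
              apply mul_le_mul_of_nonneg_right hle (by positivity)
          _ = π * θ * (r ^ (-α) * r ^ (2:ℕ)) := by ring
          _ = π * θ * r ^ (2 - α) := by rw [hid]
      · have h0 : Tendsto (fun r : ℝ => r ^ (-(α - 2))) atTop (𝓝 0) :=
          tendsto_rpow_neg_atTop (by linarith)
        have : Tendsto (fun r : ℝ => (π * θ) * r ^ (2 - α)) atTop (𝓝 ((π * θ) * 0)) := by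
          apply Tendsto.const_mul
          convert h0 using 2 with r
          congr 1; ring
        simpa using this
    -- integration by parts
    have hIBP := integral_Ioi_mul_deriv_eq_deriv_mul hderiv_u hderiv_v huv' hu'v h_zero h_infty
    have step1 : (∫ r in Ioi (0 : ℝ), 2 * π * r * (1 - Real.exp (-(θ * r ^ (-α)))))
        = ∫ r in Ioi (0:ℝ), u r * v' r := by
      congr 1; funext r; simp only [hu_def, hv'_def]; ring
    -- rewrite ∫ u' v
    have step2 : (∫ r in Ioi (0:ℝ), u' r * v r)
        = -(π * α * θ * ∫ x in Ioi (0:ℝ), x ^ (1 - α) * Real.exp (-(θ * x ^ (-α)))) := by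
      rw [← integral_const_mul, ← integral_neg]
      apply setIntegral_congr_fun measurableSet_Ioi
      intro x hx
      have hx0 : (0:ℝ) < x := hx
      have e1 : x ^ (-α - 1) * x ^ (2:ℕ) = x ^ (1 - α) := by
        rw [show (x:ℝ) ^ (2:ℕ) = x ^ ((2:ℕ):ℝ) from (Real.rpow_natCast x 2).symm,
          ← Real.rpow_add hx0]
        congr 1; push_cast; ring
      simp only [hu'_def, hv_def]
      linear_combination (-(π * α * θ * Real.exp (-(θ * x ^ (-α))))) * e1
    -- substitution x = w^{-1/α}, i.e. w = x^{-α}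
    have step3 : (∫ x in Ioi (0:ℝ), x ^ (1 - α) * Real.exp (-(θ * x ^ (-α))))
        = ∫ w in Ioi (0:ℝ), (1/α) * w ^ (-(2/α)) * Real.exp (-(θ * w)) := by
      rw [← integral_comp_rpow_Ioi (fun w => (1/α) * w ^ (-(2/α)) * Real.exp (-(θ * w)))
        (p := -α) (by linarith)]
      apply setIntegral_congr_fun measurableSet_Ioi
      intro x hx
      have hx0 : (0:ℝ) < x := hx
      have habs : |(-α)| = α := by rw [abs_neg, abs_of_pos hα0]
      have hpow : (x ^ (-α)) ^ (-(2/α)) = x ^ (2:ℝ) := by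
        rw [← Real.rpow_mul hx0.le]
        congr 1
        field_simp
      have hid : x ^ (-α - 1) * x ^ (2:ℝ) = x ^ (1 - α) := by
        rw [← Real.rpow_add hx0]; congr 1; ring
      simp only [smul_eq_mul, habs, hpow]
      symm
      calc α * x ^ (-α - 1) * (1/α * x ^ (2:ℝ) * Real.exp (-(θ * x ^ (-α))))
          = (α * (1/α)) * (x ^ (-α - 1) * x ^ (2:ℝ)) * Real.exp (-(θ * x ^ (-α))) := by ring
        _ = x ^ (1 - α) * Real.exp (-(θ * x ^ (-α))) := by
            rw [hid, mul_one_div_cancel hα0.ne', one_mul]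
    -- scaling w = θ⁻¹ * t
    have step4 : (∫ w in Ioi (0:ℝ), w ^ (-(2/α)) * Real.exp (-(θ * w)))
        = θ ^ (2/α - 1) * Real.Gamma (1 - 2/α) := by
      have hsub := integral_comp_mul_left_Ioi
        (fun t : ℝ => (θ⁻¹ * t) ^ (-(2/α)) * Real.exp (-t)) 0 hθ
      simp only [mul_zero] at hsub
      have hL : (∫ w in Ioi (0:ℝ), (θ⁻¹ * (θ * w)) ^ (-(2/α)) * Real.exp (-(θ * w)))
          = ∫ w in Ioi (0:ℝ), w ^ (-(2/α)) * Real.exp (-(θ * w)) := by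
        apply setIntegral_congr_fun measurableSet_Ioi
        intro w hw
        simp only [← mul_assoc, inv_mul_cancel₀ hθ.ne', one_mul]
      have hR : (∫ t in Ioi (0:ℝ), (θ⁻¹ * t) ^ (-(2/α)) * Real.exp (-t))
          = θ ^ (2/α) * Real.Gamma (1 - 2/α) := by
        have hG : Real.Gamma (1 - 2/α) = ∫ t in Ioi (0:ℝ), Real.exp (-t) * t ^ (-(2/α)) := by
          rw [Real.Gamma_eq_integral (by linarith)]
          congr 1; funext t; congr 2; ring
        rw [hG, ← integral_const_mul]
        apply setIntegral_congr_fun measurableSet_Ioi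
        intro t ht
        have ht0 : (0:ℝ) < t := ht
        simp only [Real.mul_rpow (inv_nonneg.mpr hθ.le) ht0.le, Real.inv_rpow hθ.le,
          ← Real.rpow_neg hθ.le, neg_neg]
        ring
      rw [← hL, hsub, hR, smul_eq_mul, Real.rpow_sub hθ, Real.rpow_one]
      field_simp
    have step5 : (∫ w in Ioi (0:ℝ), (1/α) * w ^ (-(2/α)) * Real.exp (-(θ * w)))
        = (1/α) * (θ ^ (2/α - 1) * Real.Gamma (1 - 2/α)) := by
      rw [← step4, ← integral_const_mul]
      congr 1; funext w; ring
    rw [step1, hIBP, step2, step3, step5, Real.rpow_sub hθ, Real.rpow_one]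
    field_simp
    ring
  refine ⟨hmain, fun p => by rw [hmain]; ring_nf, ?_⟩
  have hα0 : 0 < α := by linarith
  have hs0 : 0 < 2 / α := by positivity
  have hs1 : 2 / α < 1 := by rw [div_lt_one hα0]; linarith
  have h1s : 0 < 1 - 2/α := by linarith
  have hG1 : 0 < Real.Gamma (1 - 2/α) := Real.Gamma_pos_of_pos h1s
  have hθs : 0 < θ ^ (2/α) := Real.rpow_pos_of_pos hθ _
  have hsin : 0 < Real.sin (π * (2/α)) :=
    Real.sin_pos_of_pos_of_lt_pi (by positivity) (by nlinarith [Real.pi_pos])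
  have hrefl := Real.Gamma_mul_Gamma_one_sub (2/α)
  have hGadd : Real.Gamma (2/α + 1) = (2/α) * Real.Gamma (2/α) := Real.Gamma_add_one hs0.ne'
  have hlt : Real.Gamma (1 + 2/α) < 1 := gamma_one_add_lt_one hs0 hs1
  have hLHS : θ ^ (2/α) * (2 * π^2 / α) * (Real.sin (2*π/α))⁻¹
      = π * (Real.Gamma (1 + 2/α) * Real.Gamma (1 - 2/α)) * θ ^ (2/α) := by
    rw [show (2*π/α) = π * (2/α) by ring, show (1:ℝ) + 2/α = 2/α + 1 by ring, hGadd,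
      mul_assoc (2/α), hrefl]
    field_simp
  rw [hLHS]
  have hstep : Real.Gamma (1 + 2/α) * Real.Gamma (1 - 2/α) < Real.Gamma (1 - 2/α) := by
    nlinarith
  exact mul_lt_mul_of_pos_right (mul_lt_mul_of_pos_left hstep Real.pi_pos) hθs
end

section
/- For all δ > 0 and θ > 0, the improper Riemann integral ∫₀^∞ 2πr/(1 + exp(δr)/θ) dr equals (2π/δ²) · ∫₁^{θ+1} (log t)/(t−1) dt, i.e., it equals −(2π/δ²)·dilog(θ+1) where dilog(x) = ∫₁^x (log t)/(1−t) dt. -/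
open MeasureTheory Set Real Filter Topology

namespace ExpPathLossAux

lemma hasDerivAt_v (θ : ℝ) (hθ : 0 < θ) (x : ℝ) :
    HasDerivAt (fun x => -Real.log (1 + θ * Real.exp (-x)))
      (θ * Real.exp (-x) / (1 + θ * Real.exp (-x))) x := by
  have h1 : HasDerivAt (fun x : ℝ => 1 + θ * Real.exp (-x)) (-(θ * Real.exp (-x))) x := by
    have h := ((Real.hasDerivAt_exp (-x)).comp x (hasDerivAt_neg x)).const_mul θ
    have h2 := h.const_add 1
    refine h2.congr_deriv ?_
    ring
  have hpos : (0:ℝ) < 1 + θ * Real.exp (-x) := by positivity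
  have h3 := (h1.log hpos.ne').neg
  refine h3.congr_deriv ?_
  field_simp

lemma integrable_g (θ : ℝ) (hθ : 0 < θ) :
    IntegrableOn (fun x => Real.log (1 + θ * Real.exp (-x))) (Ioi (0:ℝ)) := by
  have hb : IntegrableOn (fun x => θ * Real.exp (-(1:ℝ) * x)) (Ioi (0:ℝ)) :=
    (exp_neg_integrableOn_Ioi 0 one_pos).const_mul θ
  apply Integrable.mono' hb
  · apply Continuous.aestronglyMeasurable
    apply Continuous.log (by fun_prop)
    intro x
    positivity
  · filter_upwards with x
    have hpos : (0:ℝ) < 1 + θ * Real.exp (-x) := by positivity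
    rw [Real.norm_eq_abs, abs_of_nonneg (Real.log_nonneg (by nlinarith [Real.exp_pos (-x)]))]
    have := Real.log_le_sub_one_of_pos hpos
    simpa [neg_one_mul] using this.trans (by ring_nf; exact le_refl _)

lemma integrable_f (θ : ℝ) (hθ : 0 < θ) :
    IntegrableOn (fun x => x * (θ * Real.exp (-x) / (1 + θ * Real.exp (-x)))) (Ioi (0:ℝ)) := by
  have hb : IntegrableOn (fun x : ℝ => Real.exp (-x) * x) (Ioi (0:ℝ)) := by
    have := Real.GammaIntegral_convergent (by norm_num : (0:ℝ) < 2)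
    simpa [show (2:ℝ) - 1 = 1 by norm_num, Real.rpow_one] using this
  apply Integrable.mono' (hb.const_mul θ)
  · apply Continuous.aestronglyMeasurable
    apply Continuous.mul continuous_id
    apply Continuous.div (by fun_prop) (by fun_prop)
    intro x; positivity
  · rw [ae_restrict_iff' measurableSet_Ioi]
    filter_upwards with x hx
    have hx0 : (0:ℝ) < x := hx
    have he : (0:ℝ) < Real.exp (-x) := Real.exp_pos _
    have hpos : (0:ℝ) < 1 + θ * Real.exp (-x) := by positivity
    rw [Real.norm_eq_abs, abs_of_nonneg (by positivity)]
    have h1 : θ * Real.exp (-x) / (1 + θ * Real.exp (-x)) ≤ θ * Real.exp (-x) :=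
      div_le_self (by positivity) (by nlinarith)
    nlinarith [mul_le_mul_of_nonneg_left h1 hx0.le]

/-- Integration by parts: `∫₀^∞ x·θe^{-x}/(1+θe^{-x}) dx = ∫₀^∞ log(1+θe^{-x}) dx`. -/
lemma ibp (θ : ℝ) (hθ : 0 < θ) :
    (∫ x in Ioi (0:ℝ), x * (θ * Real.exp (-x) / (1 + θ * Real.exp (-x)))) =
      ∫ x in Ioi (0:ℝ), Real.log (1 + θ * Real.exp (-x)) := by
  have key := integral_Ioi_mul_deriv_eq_deriv_mul (a := (0:ℝ))
    (u := fun x => x) (v := fun x => -Real.log (1 + θ * Real.exp (-x)))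
    (u' := fun _ => (1:ℝ)) (v' := fun x => θ * Real.exp (-x) / (1 + θ * Real.exp (-x)))
    (a' := 0) (b' := 0)
    (fun x _ => hasDerivAt_id x) (fun x _ => hasDerivAt_v θ hθ x)
    ?_ ?_ ?_ ?_
  · simp only [one_mul] at key
    rw [key, integral_neg]
    ring
  · exact integrable_f θ hθ
  · rw [show ((fun _ : ℝ => (1:ℝ)) * fun x => -Real.log (1 + θ * Real.exp (-x))) =
        fun x => -Real.log (1 + θ * Real.exp (-x)) from by funext x; simp]
    exact (integrable_g θ hθ).neg
  · -- limit at 0 from the right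
    have hc : ContinuousAt (fun x : ℝ => x * -Real.log (1 + θ * Real.exp (-x))) 0 := by
      apply ContinuousAt.mul continuousAt_id
      apply ContinuousAt.neg
      apply ContinuousAt.log (by fun_prop)
      positivity
    have h0 := (hc.continuousWithinAt (s := Ioi (0:ℝ))).tendsto
    have h1 : Tendsto (fun x : ℝ => x * -Real.log (1 + θ * Real.exp (-x)))
        (𝓝[>] (0:ℝ)) (𝓝 0) := by simpa using h0
    exact h1
  · -- limit at ∞
    have h1 : Tendsto (fun x : ℝ => x * Real.log (1 + θ * Real.exp (-x))) atTop (𝓝 0) := by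
      have hg : Tendsto (fun x : ℝ => θ * (x ^ 1 * Real.exp (-x))) atTop (𝓝 (θ * 0)) :=
        (tendsto_pow_mul_exp_neg_atTop_nhds_zero 1).const_mul θ
      rw [mul_zero] at hg
      apply squeeze_zero' ?_ ?_ hg
      · filter_upwards [eventually_ge_atTop (0:ℝ)] with x hx
        have : (0:ℝ) ≤ Real.log (1 + θ * Real.exp (-x)) :=
          Real.log_nonneg (by nlinarith [Real.exp_pos (-x)])
        positivity
      · filter_upwards [eventually_ge_atTop (0:ℝ)] with x hx
        have hpos : (0:ℝ) < 1 + θ * Real.exp (-x) := by positivity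
        have := Real.log_le_sub_one_of_pos hpos
        have h2 : Real.log (1 + θ * Real.exp (-x)) ≤ θ * Real.exp (-x) := by linarith
        calc x * Real.log (1 + θ * Real.exp (-x)) ≤ x * (θ * Real.exp (-x)) :=
              mul_le_mul_of_nonneg_left h2 hx
          _ = θ * (x ^ 1 * Real.exp (-x)) := by ring
    have h3 := h1.neg
    rw [neg_zero] at h3
    have h4 : Tendsto (fun x : ℝ => x * -Real.log (1 + θ * Real.exp (-x))) atTop (𝓝 0) := by
      simpa [mul_neg] using h3
    exact h4

/-- Change of variables `t = 1 + θ e^{-s}`. -/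
lemma subst (θ : ℝ) (hθ : 0 < θ) :
    (∫ t in Ioo (1:ℝ) (θ + 1), Real.log t / (t - 1)) =
      ∫ x in Ioi (0:ℝ), Real.log (1 + θ * Real.exp (-x)) := by
  have himg : (fun s : ℝ => 1 + θ * Real.exp (-s)) '' Ioi 0 = Ioo (1:ℝ) (θ + 1) := by
    ext t
    constructor
    · rintro ⟨s, hs, rfl⟩
      have hs0 : (0:ℝ) < s := hs
      have h1 : Real.exp (-s) < 1 := by
        rw [Real.exp_lt_one_iff]; linarith
      have h2 : (0:ℝ) < Real.exp (-s) := Real.exp_pos _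
      simp only [mem_Ioo]
      constructor
      · show (1:ℝ) < 1 + θ * Real.exp (-s)
        nlinarith
      · show 1 + θ * Real.exp (-s) < θ + 1
        nlinarith
    · rintro ⟨h1, h2⟩
      refine ⟨Real.log (θ / (t - 1)), ?_, ?_⟩
      · have : (1:ℝ) < θ / (t - 1) := (one_lt_div (by linarith)).mpr (by linarith)
        exact mem_Ioi.mpr (Real.log_pos this)
      · show 1 + θ * Real.exp (-Real.log (θ / (t - 1))) = t
        have ht1 : (0:ℝ) < t - 1 := by linarith
        rw [Real.exp_neg, Real.exp_log (div_pos hθ ht1), inv_div]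
        field_simp
        ring
  have hderiv : ∀ s ∈ Ioi (0:ℝ),
      HasDerivWithinAt (fun s : ℝ => 1 + θ * Real.exp (-s)) (-(θ * Real.exp (-s))) (Ioi 0) s := by
    intro s _
    have h := ((Real.hasDerivAt_exp (-s)).comp s (hasDerivAt_neg s)).const_mul θ
    have h2 := h.const_add 1
    have : HasDerivAt (fun s : ℝ => 1 + θ * Real.exp (-s)) (-(θ * Real.exp (-s))) s := by
      refine h2.congr_deriv ?_; ring
    exact this.hasDerivWithinAt
  have hinj : InjOn (fun s : ℝ => 1 + θ * Real.exp (-s)) (Ioi 0) := by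
    intro a _ b _ hab
    simp only at hab
    have h3 : θ * Real.exp (-a) = θ * Real.exp (-b) := by linarith
    have h4 := mul_left_cancel₀ hθ.ne' h3
    have h5 := Real.exp_injective h4
    linarith
  have := integral_image_eq_integral_abs_deriv_smul measurableSet_Ioi hderiv hinj
    (fun t => Real.log t / (t - 1))
  rw [himg] at this
  rw [this]
  apply setIntegral_congr_fun measurableSet_Ioi
  intro x hx
  have he : (0:ℝ) < Real.exp (-x) := Real.exp_pos _
  have hne : θ * Real.exp (-x) ≠ 0 := by positivity
  simp only [smul_eq_mul, abs_neg, abs_of_pos (show (0:ℝ) < θ * Real.exp (-x) by positivity)]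
  rw [show (1 + θ * Real.exp (-x) - 1) = θ * Real.exp (-x) by ring]
  field_simp

end ExpPathLossAux

/-- For `δ > 0` and `θ > 0`,
`∫₀^∞ 2πr/(1 + exp (δ r)/θ) dr = (2π/δ²) ∫₁^{θ+1} (log t)/(t-1) dt`, i.e. it equals
`-(2π/δ²) · dilog (θ+1)` where `dilog x = ∫₁^x (log t)/(1-t) dt`. -/
theorem exponential_path_loss_spatial_contention (δ θ : ℝ) (hδ : 0 < δ) (hθ : 0 < θ) :
    (∫ r in Ioi (0 : ℝ), 2 * π * r / (1 + Real.exp (δ * r) / θ)) =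
      (2 * π / δ ^ 2) * ∫ t in (1 : ℝ)..(θ + 1), Real.log t / (t - 1) ∧
    (∫ r in Ioi (0 : ℝ), 2 * π * r / (1 + Real.exp (δ * r) / θ)) =
      -((2 * π / δ ^ 2) * ∫ t in (1 : ℝ)..(θ + 1), Real.log t / (1 - t)) := by
  have hδ' : δ ≠ 0 := hδ.ne'
  -- Step 1: substitution u = δ r
  have step1 : (∫ r in Ioi (0 : ℝ), 2 * π * r / (1 + Real.exp (δ * r) / θ)) =
      (2 * π / δ ^ 2) * ∫ x in Ioi (0:ℝ), x * (θ * Real.exp (-x) / (1 + θ * Real.exp (-x))) := by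
    have h := integral_comp_mul_left_Ioi
      (fun u => 2 * π * (u / δ) / (1 + Real.exp u / θ)) 0 hδ
    rw [mul_zero] at h
    have hl : (∫ r in Ioi (0 : ℝ), 2 * π * r / (1 + Real.exp (δ * r) / θ)) =
        ∫ r in Ioi (0:ℝ), 2 * π * (δ * r / δ) / (1 + Real.exp (δ * r) / θ) := by
      apply setIntegral_congr_fun measurableSet_Ioi
      intro r _
      show 2 * π * r / (1 + Real.exp (δ * r) / θ) =
        2 * π * (δ * r / δ) / (1 + Real.exp (δ * r) / θ)
      rw [mul_div_cancel_left₀ _ hδ']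
    rw [hl, h, smul_eq_mul]
    have hr : (∫ u in Ioi (0:ℝ), 2 * π * (u / δ) / (1 + Real.exp u / θ)) =
        (2 * π / δ) * ∫ x in Ioi (0:ℝ), x * (θ * Real.exp (-x) / (1 + θ * Real.exp (-x))) := by
      rw [← integral_const_mul]
      apply setIntegral_congr_fun measurableSet_Ioi
      intro x _
      have he : (0:ℝ) < Real.exp x := Real.exp_pos _
      show 2 * π * (x / δ) / (1 + Real.exp x / θ) =
        2 * π / δ * (x * (θ * Real.exp (-x) / (1 + θ * Real.exp (-x))))
      rw [Real.exp_neg]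
      have h1 : (0:ℝ) < 1 + Real.exp x / θ := by positivity
      have h2 : (0:ℝ) < 1 + θ * (Real.exp x)⁻¹ := by positivity
      field_simp
      ring
    rw [hr, ← mul_assoc]
    congr 1
    rw [pow_two]
    field_simp
  have key : (∫ x in Ioi (0:ℝ), x * (θ * Real.exp (-x) / (1 + θ * Real.exp (-x)))) =
      ∫ t in (1 : ℝ)..(θ + 1), Real.log t / (t - 1) := by
    rw [ExpPathLossAux.ibp θ hθ, ← ExpPathLossAux.subst θ hθ]
    rw [intervalIntegral.integral_of_le (by linarith), integral_Ioc_eq_integral_Ioo]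
  have main : (∫ r in Ioi (0 : ℝ), 2 * π * r / (1 + Real.exp (δ * r) / θ)) =
      (2 * π / δ ^ 2) * ∫ t in (1 : ℝ)..(θ + 1), Real.log t / (t - 1) := by
    rw [step1, key]
  refine ⟨main, ?_⟩
  rw [main]
  have : (∫ t in (1 : ℝ)..(θ + 1), Real.log t / (1 - t)) =
      -∫ t in (1 : ℝ)..(θ + 1), Real.log t / (t - 1) := by
    rw [← intervalIntegral.integral_neg]
    apply intervalIntegral.integral_congr
    intro t _
    show Real.log t / (1 - t) = -(Real.log t / (t - 1))
    rw [show (1 - t : ℝ) = -(t - 1) by ring, div_neg]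
  rw [this]
  ring
end

section
/- Let θ > 0, p ∈ [0,1), and set y = π θ^{1/4}/√2. Then the infinite product ∏_{i=1}^∞ (1 − p/(1 + i⁴/θ)) converges and equals [cosh²(y(1−p)^{1/4}) − cos²(y(1−p)^{1/4})] / [√(1−p) · (cosh² y − cos² y)]. That is, for one-sided infinite regular line networks with slotted ALOHA and α = 4, the success probability p_s has this closed form. -/
open Real

open Filter Finset in
lemma prod_quartic_tendsto (a : ℝ) (ha : 0 < a) :
    Tendsto (fun n : ℕ => ∏ j ∈ Finset.range n, (1 + a / ((j : ℝ) + 1) ^ 4)) atTop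
      (nhds ((Real.cosh (π * a ^ ((1:ℝ)/4) / Real.sqrt 2) ^ 2 -
        Real.cos (π * a ^ ((1:ℝ)/4) / Real.sqrt 2) ^ 2) / (π ^ 2 * Real.sqrt a))) := by
  set r : ℝ := a ^ ((1:ℝ)/4) with hr_def
  have hr : 0 < r := Real.rpow_pos_of_pos ha _
  have hr4 : r ^ 4 = a := by
    rw [hr_def, ← Real.rpow_natCast (a ^ ((1:ℝ)/4)) 4, ← Real.rpow_mul ha.le]
    norm_num
  have hr2 : r ^ 2 = Real.sqrt a := by
    rw [hr_def, ← Real.rpow_natCast (a ^ ((1:ℝ)/4)) 2, ← Real.rpow_mul ha.le,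
      Real.sqrt_eq_rpow]
    norm_num
  set y : ℝ := π * r / Real.sqrt 2 with hy_def
  set z : ℂ := ((r / Real.sqrt 2 : ℝ) : ℂ) * (1 + Complex.I) with hz_def
  set w : ℂ := ((r / Real.sqrt 2 : ℝ) : ℂ) * (1 - Complex.I) with hw_def
  have hs2 : (Real.sqrt 2 : ℝ) ^ 2 = 2 := Real.sq_sqrt (by norm_num)
  have hs2' : ((Real.sqrt 2 : ℝ) : ℂ) ^ 2 = 2 := by exact_mod_cast hs2
  have hs2ne : (Real.sqrt 2 : ℝ) ≠ 0 := by positivity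
  have hz2 : z ^ 2 = ((r ^ 2 : ℝ) : ℂ) * Complex.I := by
    rw [hz_def, mul_pow]
    push_cast
    rw [div_pow, hs2']
    linear_combination ((r:ℂ)^2/2) * Complex.I_sq
  have hw2 : w ^ 2 = -((r ^ 2 : ℝ) : ℂ) * Complex.I := by
    rw [hw_def, mul_pow]
    push_cast
    rw [div_pow, hs2']
    linear_combination ((r:ℂ)^2/2) * Complex.I_sq
  have hr4C : ((r:ℂ)) ^ 4 = (a : ℂ) := by exact_mod_cast hr4
  have hsum0 : z ^ 2 + w ^ 2 = 0 := by rw [hz2, hw2]; ring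
  have hprodA : z ^ 2 * w ^ 2 = (a : ℂ) := by
    rw [hz2, hw2]; push_cast
    linear_combination (-(r:ℂ)^4) * Complex.I_sq + hr4C
  have hzw : z * w = ((r ^ 2 : ℝ) : ℂ) := by
    have e : z * w = ((r / Real.sqrt 2 : ℝ) : ℂ) ^ 2 * (1 - Complex.I ^ 2) := by
      rw [hz_def, hw_def]; ring
    rw [e, Complex.I_sq]
    push_cast
    rw [div_pow, hs2']
    ring
  clear_value z w
  have hfactor : ∀ k : ℕ, (1 - z ^ 2 / ((k : ℂ) + 1) ^ 2) * (1 - w ^ 2 / ((k : ℂ) + 1) ^ 2)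
      = 1 + (a : ℂ) / ((k : ℂ) + 1) ^ 4 := by
    intro k
    have hk : ((k : ℂ) + 1) ≠ 0 := by
      have : ((k + 1 : ℕ) : ℂ) ≠ 0 := Nat.cast_ne_zero.mpr k.succ_ne_zero
      push_cast at this
      exact this
    field_simp
    linear_combination (-((k:ℂ)+1)^2) * hsum0 + hprodA
  set c : ℂ := (π:ℂ)^2 * ((r^2:ℝ):ℂ) with hc_def
  have hcne : c ≠ 0 := by
    rw [hc_def]
    apply mul_ne_zero
    · exact pow_ne_zero _ (Complex.ofReal_ne_zero.mpr Real.pi_ne_zero)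
    · exact Complex.ofReal_ne_zero.mpr (ne_of_gt (pow_pos hr 2))
  have h3 : Tendsto (fun n : ℕ => c * ∏ j ∈ Finset.range n, (1 + (a:ℂ)/((j:ℂ)+1)^4)) atTop
      (nhds (Complex.sin ((π:ℂ)*z) * Complex.sin ((π:ℂ)*w))) := by
    have hmul := (Complex.tendsto_euler_sin_prod z).mul (Complex.tendsto_euler_sin_prod w)
    refine hmul.congr fun n => ?_
    have hsplit : ∏ j ∈ Finset.range n, (1 + (a:ℂ)/((j:ℂ)+1)^4)
        = (∏ j ∈ Finset.range n, (1 - z^2/((j:ℂ)+1)^2)) *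
          (∏ j ∈ Finset.range n, (1 - w^2/((j:ℂ)+1)^2)) := by
      rw [← Finset.prod_mul_distrib]
      exact Finset.prod_congr rfl fun j _ => (hfactor j).symm
    rw [hsplit, hc_def, ← hzw]
    ring
  have h4 : Tendsto (fun n : ℕ => ∏ j ∈ Finset.range n, (1 + (a:ℂ)/((j:ℂ)+1)^4)) atTop
      (nhds (c⁻¹ * (Complex.sin ((π:ℂ)*z) * Complex.sin ((π:ℂ)*w)))) := by
    have := h3.const_mul c⁻¹
    simpa [inv_mul_cancel_left₀ hcne] using this
  have hpz : (π:ℂ) * z = ((y:ℝ):ℂ) + ((y:ℝ):ℂ) * Complex.I := by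
    rw [hz_def, hy_def]; push_cast; ring
  have hpw : (π:ℂ) * w = ((y:ℝ):ℂ) - ((y:ℝ):ℂ) * Complex.I := by
    rw [hw_def, hy_def]; push_cast; ring
  have key : (Real.sin y * Real.cosh y)^2 + (Real.cos y * Real.sinh y)^2
      = Real.cosh y ^ 2 - Real.cos y ^ 2 := by
    nlinarith [Real.sin_sq_add_cos_sq y, Real.cosh_sq_sub_sinh_sq y]
  have hS : Complex.sin ((π:ℂ) * z) * Complex.sin ((π:ℂ) * w)
      = ((Real.cosh y ^ 2 - Real.cos y ^ 2 : ℝ) : ℂ) := by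
    rw [hpz, hpw, Complex.sin_add, Complex.sin_sub, Complex.sin_mul_I, Complex.cos_mul_I]
    have keyC := congrArg (Complex.ofReal) key
    push_cast at keyC ⊢
    linear_combination keyC - (Complex.cos (y:ℂ) * Complex.sinh (y:ℂ))^2 * Complex.I_sq
  have hval : c⁻¹ * ((Real.cosh y ^ 2 - Real.cos y ^ 2 : ℝ) : ℂ)
      = (((Real.cosh y ^ 2 - Real.cos y ^ 2) / (π ^ 2 * Real.sqrt a) : ℝ) : ℂ) := by
    rw [hc_def, ← hr2]
    push_cast
    field_simp
  rw [hS, hval] at h4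
  have h5 := (Complex.continuous_re.tendsto _).comp h4
  refine h5.congr fun n => ?_
  simp only [Function.comp_apply]
  have : ∏ j ∈ Finset.range n, (1 + (a:ℂ)/((j:ℂ)+1)^4)
      = ((∏ j ∈ Finset.range n, (1 + a/((j:ℝ)+1)^4) : ℝ) : ℂ) := by
    push_cast
    rfl
  rw [this, Complex.ofReal_re]


/-- For `θ > 0`, `p ∈ [0,1)` and `y = π θ^{1/4}/√2`, the success probability of a one-sided
infinite regular line network with slotted ALOHA and `α = 4` is
`p_s = ∏_{i=1}^∞ (1 - p/(1 + i⁴/θ))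
     = (cosh² (y(1-p)^{1/4}) - cos² (y(1-p)^{1/4})) / (√(1-p) (cosh² y - cos² y))`. -/
theorem regular_line_network_alpha4_success_probability (θ p : ℝ) (hθ : 0 < θ)
    (hp0 : 0 ≤ p) (hp1 : p < 1) :
    HasProd (fun i : ℕ => 1 - p / (1 + ((i : ℝ) + 1) ^ 4 / θ))
      ((Real.cosh (π * θ ^ ((1 : ℝ) / 4) / Real.sqrt 2 * (1 - p) ^ ((1 : ℝ) / 4)) ^ 2 -
          Real.cos (π * θ ^ ((1 : ℝ) / 4) / Real.sqrt 2 * (1 - p) ^ ((1 : ℝ) / 4)) ^ 2) /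
        (Real.sqrt (1 - p) *
          (Real.cosh (π * θ ^ ((1 : ℝ) / 4) / Real.sqrt 2) ^ 2 -
            Real.cos (π * θ ^ ((1 : ℝ) / 4) / Real.sqrt 2) ^ 2))) := by

  have h1p : (0:ℝ) < 1 - p := by linarith
  set b : ℝ := θ * (1 - p) with hb_def
  have hb : 0 < b := mul_pos hθ h1p
  set t : ℕ → ℝ := fun i => 1 - p / (1 + ((i : ℝ) + 1) ^ 4 / θ) with ht_def
  have hden : ∀ i : ℕ, (0:ℝ) < 1 + ((i : ℝ) + 1) ^ 4 / θ := fun i => by positivity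
  have hden1 : ∀ i : ℕ, (1:ℝ) ≤ 1 + ((i : ℝ) + 1) ^ 4 / θ := fun i =>
    le_add_of_nonneg_right (by positivity)
  have hfrac_le : ∀ i : ℕ, p / (1 + ((i : ℝ) + 1) ^ 4 / θ) ≤ p := fun i =>
    div_le_self hp0 (hden1 i)
  have hfrac_nonneg : ∀ i : ℕ, 0 ≤ p / (1 + ((i : ℝ) + 1) ^ 4 / θ) := fun i =>
    div_nonneg hp0 (hden i).le
  have htpos : ∀ i, 0 < t i := fun i => by
    have := hfrac_le i; simp only [ht_def]; linarith
  have htlow : ∀ i, 1 - p ≤ t i := fun i => by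
    have := hfrac_le i; simp only [ht_def]; linarith
  have htle1 : ∀ i, t i ≤ 1 := fun i => by
    have := hfrac_nonneg i; simp only [ht_def]; linarith
  -- term rewriting
  have hteq : ∀ i : ℕ, t i = (1 + b / ((i:ℝ)+1)^4) / (1 + θ / ((i:ℝ)+1)^4) := by
    intro i
    have hk : ((i:ℝ)+1) ≠ 0 := by positivity
    have hθ' : θ ≠ 0 := hθ.ne'
    simp only [ht_def, hb_def]
    field_simp
    ring
  -- summability of logs
  have hsum4 : Summable (fun i : ℕ => (p * θ / (1 - p)) * (1 / ((i:ℝ)+1)^4)) := by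
    apply Summable.mul_left
    have h0 : Summable (fun n : ℕ => 1 / (n : ℝ) ^ 4) :=
      summable_one_div_nat_pow.mpr (by norm_num)
    have h1 := (summable_nat_add_iff 1).mpr h0
    exact h1.congr fun i => by push_cast; ring
  have hsummable : Summable (fun i : ℕ => -Real.log (t i)) := by
    refine Summable.of_nonneg_of_le (fun i => ?_) (fun i => ?_) hsum4
    · exact neg_nonneg.mpr (Real.log_nonpos (htpos i).le (htle1 i))
    · have h1 : -Real.log (t i) ≤ 1 / t i - 1 := by
        have h := Real.log_le_sub_one_of_pos (inv_pos.mpr (htpos i))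
        rw [Real.log_inv] at h
        rw [one_div]
        linarith
      have h2 : 1 / t i - 1 = (1 - t i) / t i := by
        rw [sub_div, div_self (htpos i).ne']
      have h3 : 1 - t i ≤ p * θ / ((i:ℝ)+1)^4 := by
        have hk4 : (0:ℝ) < ((i:ℝ)+1)^4 := by positivity
        have he : 1 - t i = p / (1 + ((i:ℝ)+1)^4/θ) := by
          have : t i = 1 - p / (1 + ((i:ℝ)+1)^4/θ) := rfl
          rw [this]; ring
        rw [he, div_le_div_iff₀ (hden i) hk4]
        have : p * θ ≤ p * θ + p * (((i:ℝ)+1)^4) * 0 := by simp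
        calc p * ((i:ℝ)+1)^4 ≤ p * θ + p * ((i:ℝ)+1)^4 := by nlinarith
          _ = p * θ * (1 + ((i:ℝ)+1)^4/θ) := by field_simp
      have h4 : (1 - t i) / t i ≤ (p * θ / ((i:ℝ)+1)^4) / (1 - p) :=
        div_le_div₀ (by positivity) h3 h1p (htlow i)
      calc -Real.log (t i) ≤ 1 / t i - 1 := h1
        _ = (1 - t i) / t i := h2
        _ ≤ (p * θ / ((i:ℝ)+1)^4) / (1 - p) := h4
        _ = p * θ / (1 - p) * (1 / ((i:ℝ)+1)^4) := by ring
  have hlog : Summable fun i => Real.log (t i) := by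
    simpa using hsummable.neg
  have hmult : Multipliable t := by
    refine ⟨Real.exp (∑' i, Real.log (t i)), ?_⟩
    have h := hlog.hasSum.rexp
    have hfe : (Real.exp ∘ fun i => Real.log (t i)) = t :=
      funext fun i => Real.exp_log (htpos i)
    rwa [hfe] at h
  -- limit of partial products
  have hNθpos : 0 < Real.cosh (π * θ ^ ((1:ℝ)/4) / Real.sqrt 2) ^ 2 -
      Real.cos (π * θ ^ ((1:ℝ)/4) / Real.sqrt 2) ^ 2 := by
    set u := π * θ ^ ((1:ℝ)/4) / Real.sqrt 2 with hu_def
    have hu : u ≠ 0 := by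
      rw [hu_def]
      have : 0 < π * θ ^ ((1:ℝ)/4) / Real.sqrt 2 := by
        apply div_pos (mul_pos Real.pi_pos (Real.rpow_pos_of_pos hθ _)) (by positivity)
      exact this.ne'
    have h1 : 1 < Real.cosh u := Real.one_lt_cosh.mpr hu
    nlinarith [Real.neg_one_le_cos u, Real.cos_le_one u]
  have htendb := prod_quartic_tendsto b hb
  have htendθ := prod_quartic_tendsto θ hθ
  have hCθne : (Real.cosh (π * θ ^ ((1:ℝ)/4) / Real.sqrt 2) ^ 2 -
      Real.cos (π * θ ^ ((1:ℝ)/4) / Real.sqrt 2) ^ 2) / (π^2 * Real.sqrt θ) ≠ 0 := by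
    apply ne_of_gt
    apply div_pos hNθpos
    positivity
  have htendt : Filter.Tendsto (fun n : ℕ => ∏ i ∈ Finset.range n, t i) Filter.atTop
      (nhds (((Real.cosh (π * b ^ ((1:ℝ)/4) / Real.sqrt 2) ^ 2 -
          Real.cos (π * b ^ ((1:ℝ)/4) / Real.sqrt 2) ^ 2) / (π^2 * Real.sqrt b)) /
        ((Real.cosh (π * θ ^ ((1:ℝ)/4) / Real.sqrt 2) ^ 2 -
          Real.cos (π * θ ^ ((1:ℝ)/4) / Real.sqrt 2) ^ 2) / (π^2 * Real.sqrt θ)))) := by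
    refine (htendb.div htendθ hCθne).congr fun n => ?_
    simp only [Pi.div_apply]
    rw [← Finset.prod_div_distrib]
    exact Finset.prod_congr rfl fun i _ => (hteq i).symm
  -- identify the limit value
  have hb14 : b ^ ((1:ℝ)/4) = θ ^ ((1:ℝ)/4) * (1-p) ^ ((1:ℝ)/4) := by
    rw [hb_def, Real.mul_rpow hθ.le h1p.le]
  have hsqrtb : Real.sqrt b = Real.sqrt θ * Real.sqrt (1-p) := by
    rw [hb_def, Real.sqrt_mul hθ.le]
  have harg : π * b ^ ((1:ℝ)/4) / Real.sqrt 2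
      = π * θ ^ ((1:ℝ)/4) / Real.sqrt 2 * (1-p) ^ ((1:ℝ)/4) := by
    rw [hb14]; ring
  have hval : ((Real.cosh (π * b ^ ((1:ℝ)/4) / Real.sqrt 2) ^ 2 -
          Real.cos (π * b ^ ((1:ℝ)/4) / Real.sqrt 2) ^ 2) / (π^2 * Real.sqrt b)) /
        ((Real.cosh (π * θ ^ ((1:ℝ)/4) / Real.sqrt 2) ^ 2 -
          Real.cos (π * θ ^ ((1:ℝ)/4) / Real.sqrt 2) ^ 2) / (π^2 * Real.sqrt θ))
      = (Real.cosh (π * θ ^ ((1 : ℝ) / 4) / Real.sqrt 2 * (1 - p) ^ ((1 : ℝ) / 4)) ^ 2 -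
          Real.cos (π * θ ^ ((1 : ℝ) / 4) / Real.sqrt 2 * (1 - p) ^ ((1 : ℝ) / 4)) ^ 2) /
        (Real.sqrt (1 - p) *
          (Real.cosh (π * θ ^ ((1 : ℝ) / 4) / Real.sqrt 2) ^ 2 -
            Real.cos (π * θ ^ ((1 : ℝ) / 4) / Real.sqrt 2) ^ 2)) := by
    rw [harg, hsqrtb]
    have hπ : (π:ℝ) ≠ 0 := Real.pi_ne_zero
    have hsθ : Real.sqrt θ ≠ 0 := by positivity
    have hsp : Real.sqrt (1-p) ≠ 0 := by positivity
    have hNθ : Real.cosh (π * θ ^ ((1:ℝ)/4) / Real.sqrt 2) ^ 2 -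
      Real.cos (π * θ ^ ((1:ℝ)/4) / Real.sqrt 2) ^ 2 ≠ 0 := hNθpos.ne'
    field_simp
  rw [hval] at htendt
  exact (hmult.hasProd_iff_tendsto_nat).mpr htendt
end

section
/- Let θ > 0 and m > 0, and set y = π√θ/m. Then the infinite product ∏_{i=1}^∞ (1 + θ/(m²i²)) converges and its reciprocal equals y/sinh(y). That is, the success probability of a one-sided infinite regular line network with Rayleigh fading, m-phase TDMA and path loss exponent α = 2 is p_s = y/sinh(y). -/
open Real

lemma sinh_euler_prod (t : ℝ) (ht0 : 0 < t) :
    Filter.Tendsto (fun n : ℕ => ∏ j ∈ Finset.range n, ((1 : ℝ) + t ^ 2 / ((j : ℝ) + 1) ^ 2))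
      Filter.atTop (nhds (Real.sinh (π * t) / (π * t))) := by
  have hC := Complex.tendsto_euler_sin_prod (t * Complex.I)
  have hne : ((π : ℂ) * ((t : ℂ) * Complex.I)) ≠ 0 :=
    mul_ne_zero (by exact_mod_cast Real.pi_ne_zero)
      (mul_ne_zero (by exact_mod_cast ht0.ne') Complex.I_ne_zero)
  have hC2 := hC.const_mul ((π * ((t : ℂ) * Complex.I))⁻¹)
  have key : Filter.Tendsto
      (fun n : ℕ => ∏ j ∈ Finset.range n, ((1 : ℂ) - ((t : ℂ) * Complex.I) ^ 2 / ((j : ℂ) + 1) ^ 2))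
      Filter.atTop (nhds ((π * ((t : ℂ) * Complex.I))⁻¹ * Complex.sin (π * ((t : ℂ) * Complex.I)))) := by
    refine hC2.congr (fun n => ?_)
    rw [← mul_assoc, inv_mul_cancel₀ hne, one_mul]
  have hfac : ∀ j : ℕ, ((1 : ℂ) - ((t : ℂ) * Complex.I) ^ 2 / ((j : ℂ) + 1) ^ 2)
      = (((1 : ℝ) + t ^ 2 / ((j : ℝ) + 1) ^ 2) : ℝ) := by
    intro j
    rw [mul_pow, Complex.I_sq]
    push_cast
    ring
  have hlim : ((π * ((t : ℂ) * Complex.I))⁻¹ * Complex.sin (π * ((t : ℂ) * Complex.I)))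
      = ((Real.sinh (π * t) / (π * t) : ℝ) : ℂ) := by
    have : (π : ℂ) * ((t : ℂ) * Complex.I) = ((π * t : ℝ) : ℂ) * Complex.I := by
      push_cast; ring
    have hpt : ((π * t : ℝ) : ℂ) ≠ 0 := by
      exact_mod_cast (mul_pos Real.pi_pos ht0).ne'
    rw [this, Complex.sin_mul_I, ← Complex.ofReal_sinh, Complex.ofReal_div]
    field_simp
  rw [hlim] at key
  rw [← Filter.tendsto_ofReal_iff]
  refine key.congr (fun n => ?_)
  rw [Complex.ofReal_prod]
  exact Finset.prod_congr rfl fun j _ => hfac j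

/-- For `θ > 0`, `m > 0` and `y = π√θ/m`, the product `∏_{i=1}^∞ (1 + θ/(m²i²))` converges
and its reciprocal — the success probability of a one-sided infinite regular line network
with Rayleigh fading, `m`-phase TDMA and `α = 2` — equals `y/sinh y`. -/
theorem tdma_line_network_alpha2 (θ m : ℝ) (hθ : 0 < θ) (hm : 0 < m) :
    ∃ P : ℝ, HasProd (fun i : ℕ => 1 + θ / (m ^ 2 * ((i : ℝ) + 1) ^ 2)) P ∧
      P⁻¹ = (π * Real.sqrt θ / m) / Real.sinh (π * Real.sqrt θ / m) := by
  set t : ℝ := Real.sqrt θ / m with ht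
  have ht0 : 0 < t := div_pos (Real.sqrt_pos.mpr hθ) hm
  have ht2 : t ^ 2 = θ / m ^ 2 := by
    rw [ht, div_pow, Real.sq_sqrt hθ.le]
  have hterm : (fun i : ℕ => (1 : ℝ) + θ / (m ^ 2 * ((i : ℝ) + 1) ^ 2))
      = fun i : ℕ => 1 + t ^ 2 / ((i : ℝ) + 1) ^ 2 := by
    funext i; rw [ht2, div_div]
  have hpos : ∀ i : ℕ, (0 : ℝ) < 1 + t ^ 2 / ((i : ℝ) + 1) ^ 2 := by
    intro i; positivity
  -- summability of the logs
  have hsum2 : Summable (fun i : ℕ => t ^ 2 / ((i : ℝ) + 1) ^ 2) := by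
    have h0 : Summable (fun n : ℕ => 1 / (n : ℝ) ^ 2) :=
      Real.summable_one_div_nat_pow.mpr one_lt_two
    have h1 : Summable (fun n : ℕ => 1 / ((n : ℝ) + 1) ^ 2) := by
      have := (summable_nat_add_iff 1).mpr h0
      refine this.congr (fun n => ?_)
      push_cast
      ring_nf
    have := h1.mul_left (t ^ 2)
    refine this.congr (fun n => ?_)
    rw [mul_one_div]
  have hsum : Summable (fun i : ℕ => Real.log (1 + t ^ 2 / ((i : ℝ) + 1) ^ 2)) := by
    refine Summable.of_nonneg_of_le
      (fun i => Real.log_nonneg (le_add_of_nonneg_right (by positivity))) (fun i => ?_) hsum2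
    have := Real.log_le_sub_one_of_pos (hpos i)
    linarith
  -- multipliability
  have hmul : Multipliable (fun i : ℕ => (1 : ℝ) + t ^ 2 / ((i : ℝ) + 1) ^ 2) :=
    Real.multipliable_of_summable_log hpos hsum
  set P : ℝ := ∏' i : ℕ, ((1 : ℝ) + t ^ 2 / ((i : ℝ) + 1) ^ 2) with hP
  have hprod : HasProd (fun i : ℕ => (1 : ℝ) + t ^ 2 / ((i : ℝ) + 1) ^ 2) P := hmul.hasProd
  have hten := hprod.tendsto_prod_nat
  have heuler := sinh_euler_prod t ht0
  have hPeq : P = Real.sinh (π * t) / (π * t) := tendsto_nhds_unique hten heuler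
  refine ⟨P, ?_, ?_⟩
  · rw [hterm]; exact hprod
  · have hy : π * t = π * Real.sqrt θ / m := by rw [ht, mul_div_assoc]
    rw [hPeq, hy, inv_div]
end

section
/- Let θ > 0 and m > 0, and set y = π θ^{1/4}/(√2 · m). Then the infinite product ∏_{i=1}^∞ (1 + θ/(m⁴i⁴)) converges and its reciprocal equals 2y²/(cosh² y − cos² y). That is, the success probability of a one-sided infinite regular line network with Rayleigh fading, m-phase TDMA and path loss exponent α = 4 is p_s = 2y²/(cosh² y − cos² y). -/
open Real Filter Finset

/-- For `θ > 0`, `m > 0` and `y = π θ^{1/4}/(√2 m)`, the product `∏_{i=1}^∞ (1 + θ/(m⁴i⁴))`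
converges and its reciprocal — the success probability of a one-sided infinite regular line
network with Rayleigh fading, `m`-phase TDMA and `α = 4` — equals
`2y²/(cosh² y - cos² y)`. -/
theorem tdma_line_network_alpha4 (θ m : ℝ) (hθ : 0 < θ) (hm : 0 < m) :
    ∃ P : ℝ, HasProd (fun i : ℕ => 1 + θ / (m ^ 4 * ((i : ℝ) + 1) ^ 4)) P ∧
      P⁻¹ = 2 * (π * θ ^ ((1 : ℝ) / 4) / (Real.sqrt 2 * m)) ^ 2 /
        (Real.cosh (π * θ ^ ((1 : ℝ) / 4) / (Real.sqrt 2 * m)) ^ 2 -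
          Real.cos (π * θ ^ ((1 : ℝ) / 4) / (Real.sqrt 2 * m)) ^ 2) := by
  have h2 : (0:ℝ) < Real.sqrt 2 := Real.sqrt_pos.mpr (by norm_num)
  have hs2 : (Real.sqrt 2) ^ 2 = 2 := Real.sq_sqrt (by norm_num)
  set y : ℝ := π * θ ^ ((1 : ℝ) / 4) / (Real.sqrt 2 * m) with hy
  have hθ4 : (0:ℝ) < θ ^ ((1:ℝ)/4) := Real.rpow_pos_of_pos hθ _
  set b : ℝ := θ ^ ((1:ℝ)/4) / m with hbdef
  have hb : 0 < b := div_pos hθ4 hm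
  have hθb : (θ ^ ((1:ℝ)/4)) ^ (4:ℕ) = θ := by
    rw [← Real.rpow_natCast (θ ^ ((1:ℝ)/4)) 4, ← Real.rpow_mul hθ.le]; norm_num
  have hb4 : b ^ 4 = θ / m ^ 4 := by rw [hbdef, div_pow, hθb]
  set s : ℝ := b / Real.sqrt 2 with hsdef
  have hs : 0 < s := div_pos hb h2
  have hsb : 2 * s ^ 2 = b ^ 2 := by
    rw [hsdef, div_pow, hs2]; field_simp
  have hys : y = π * s := by
    rw [hy, hsdef, hbdef]; field_simp
  have hy0 : 0 < y := by rw [hys]; exact mul_pos pi_pos hs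
  -- f matches b-form
  have hf : ∀ i : ℕ, 1 + θ / (m ^ 4 * ((i : ℝ) + 1) ^ 4)
      = 1 + b ^ 4 / ((i:ℝ) + 1) ^ 4 := by
    intro i; rw [hb4, div_div]
  clear_value y b s
  set z : ℂ := (s:ℂ) + (s:ℂ) * Complex.I with hz
  set w : ℂ := (s:ℂ) - (s:ℂ) * Complex.I with hw
  have hk : ∀ j : ℕ, ((j:ℂ) + 1) ≠ 0 := fun j => Nat.cast_add_one_ne_zero j
  have hb2C : (2:ℂ) * (s:ℂ) ^ 2 = (b:ℂ) ^ 2 := by exact_mod_cast hsb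
  have hz2 : z ^ 2 = (b:ℂ) ^ 2 * Complex.I := by
    rw [hz, ← hb2C]; linear_combination (s:ℂ) ^ 2 * Complex.I_sq
  have hw2 : w ^ 2 = -((b:ℂ) ^ 2 * Complex.I) := by
    rw [hw, ← hb2C]; linear_combination (s:ℂ) ^ 2 * Complex.I_sq
  have key : ∀ (B k : ℂ), (1 - B * Complex.I / k ^ 2) * (1 - -(B * Complex.I) / k ^ 2)
      = 1 + B ^ 2 / k ^ 2 ^ 2 := by
    intro B k
    linear_combination (-(B ^ 2) / k ^ 2 ^ 2) * Complex.I_sq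
  have hfac : ∀ j : ℕ, (1 - z ^ 2 / ((j:ℂ) + 1) ^ 2) * (1 - w ^ 2 / ((j:ℂ) + 1) ^ 2)
      = ((1 + b ^ 4 / ((j:ℝ) + 1) ^ 4 : ℝ) : ℂ) := by
    intro j
    rw [hz2, hw2, key ((b:ℂ) ^ 2) ((j:ℂ) + 1)]
    push_cast
    ring
  -- Euler products
  have T1 := Complex.tendsto_euler_sin_prod z
  have T2 := Complex.tendsto_euler_sin_prod w
  set L : ℂ := Complex.sin (π * z) * Complex.sin (π * w) with hL
  have T := T1.mul T2
  have heq : ∀ n : ℕ,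
      (π * z * ∏ j ∈ Finset.range n, (1 - z ^ 2 / ((j:ℂ) + 1) ^ 2)) *
        (π * w * ∏ j ∈ Finset.range n, (1 - w ^ 2 / ((j:ℂ) + 1) ^ 2))
      = ((π ^ 2 * b ^ 2 * ∏ j ∈ Finset.range n, (1 + b ^ 4 / ((j:ℝ) + 1) ^ 4) : ℝ) : ℂ) := by
    intro n
    have hzw2 : z * w = ((b ^ 2 : ℝ) : ℂ) := by
      rw [hz, hw]
      push_cast
      rw [← hb2C]
      linear_combination -(s:ℂ) ^ 2 * Complex.I_sq
    calc (π * z * ∏ j ∈ Finset.range n, (1 - z ^ 2 / ((j:ℂ) + 1) ^ 2)) *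
        (π * w * ∏ j ∈ Finset.range n, (1 - w ^ 2 / ((j:ℂ) + 1) ^ 2))
        = (π:ℂ) ^ 2 * (z * w) * ∏ j ∈ Finset.range n,
            ((1 - z ^ 2 / ((j:ℂ) + 1) ^ 2) * (1 - w ^ 2 / ((j:ℂ) + 1) ^ 2)) := by
          rw [Finset.prod_mul_distrib]; ring
      _ = ((π ^ 2 * b ^ 2 : ℝ) : ℂ) * ∏ j ∈ Finset.range n,
            ((1 + b ^ 4 / ((j:ℝ) + 1) ^ 4 : ℝ) : ℂ) := by
          rw [hzw2, Finset.prod_congr rfl fun j _ => hfac j]; push_cast; ring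
      _ = _ := by rw [← Complex.ofReal_prod]; push_cast; ring
  rw [show (fun n : ℕ => (π * z * ∏ j ∈ Finset.range n, (1 - z ^ 2 / ((j:ℂ) + 1) ^ 2)) *
        (π * w * ∏ j ∈ Finset.range n, (1 - w ^ 2 / ((j:ℂ) + 1) ^ 2))) =
      (fun n : ℕ => ((π ^ 2 * b ^ 2 * ∏ j ∈ Finset.range n,
        (1 + b ^ 4 / ((j:ℝ) + 1) ^ 4) : ℝ) : ℂ)) from funext heq] at T
  -- take real parts
  have Tre : Tendsto (fun n : ℕ => π ^ 2 * b ^ 2 * ∏ j ∈ Finset.range n,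
      (1 + b ^ 4 / ((j:ℝ) + 1) ^ 4)) atTop (nhds L.re) := by
    have := (Complex.continuous_re.tendsto L).comp T
    simpa only [Function.comp_def, Complex.ofReal_re] using this
  -- compute L.re
  have hπz : (π:ℂ) * z = (y:ℂ) + (y:ℂ) * Complex.I := by
    rw [hz, hys]; push_cast; ring
  have hπw : (π:ℂ) * w = (y:ℂ) - (y:ℂ) * Complex.I := by
    rw [hw, hys]; push_cast; ring
  have r : Real.sin y ^ 2 * Real.cosh y ^ 2 + Real.cos y ^ 2 * Real.sinh y ^ 2
      = Real.cosh y ^ 2 - Real.cos y ^ 2 := by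
    nlinarith [Real.sin_sq_add_cos_sq y, Real.cosh_sq_sub_sinh_sq y]
  have rC : Complex.sin (y:ℂ) ^ 2 * Complex.cosh (y:ℂ) ^ 2
        + Complex.cos (y:ℂ) ^ 2 * Complex.sinh (y:ℂ) ^ 2
      = Complex.cosh (y:ℂ) ^ 2 - Complex.cos (y:ℂ) ^ 2 := by
    rw [← Complex.ofReal_sin, ← Complex.ofReal_cos, ← Complex.ofReal_sinh, ← Complex.ofReal_cosh]
    exact_mod_cast r
  have hLC : L = ((Real.cosh y ^ 2 - Real.cos y ^ 2 : ℝ) : ℂ) := by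
    rw [hL, hπz, hπw, Complex.sin_add, Complex.sin_sub, Complex.sin_mul_I, Complex.cos_mul_I,
      Complex.ofReal_sub, Complex.ofReal_pow, Complex.ofReal_pow,
      Complex.ofReal_cosh, Complex.ofReal_cos]
    linear_combination rC - Complex.cos (y:ℂ) ^ 2 * Complex.sinh (y:ℂ) ^ 2 * Complex.I_sq
  have hLre : L.re = Real.cosh y ^ 2 - Real.cos y ^ 2 := by
    rw [hLC, Complex.ofReal_re]
  have hC : π ^ 2 * b ^ 2 = 2 * y ^ 2 := by
    rw [hys]; linear_combination -π ^ 2 * hsb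
  have hD : 0 < Real.cosh y ^ 2 - Real.cos y ^ 2 := by
    nlinarith [Real.sinh_pos_iff.mpr hy0, Real.cosh_sq_sub_sinh_sq y, Real.cos_sq_le_one y]
  have hC0 : (π ^ 2 * b ^ 2) ≠ 0 := by positivity
  set P : ℝ := (Real.cosh y ^ 2 - Real.cos y ^ 2) / (π ^ 2 * b ^ 2) with hP
  have TP : Tendsto (fun n : ℕ => ∏ j ∈ Finset.range n,
      (1 + b ^ 4 / ((j:ℝ) + 1) ^ 4)) atTop (nhds P) := by
    have h := Tre.const_mul ((π ^ 2 * b ^ 2)⁻¹)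
    rw [hLre] at h
    simpa only [hP, inv_mul_cancel_left₀ hC0, div_eq_inv_mul] using h
  refine ⟨P, ?_, ?_⟩
  · -- HasProd
    have h1 : ∀ i : ℕ, (1:ℝ) ≤ 1 + θ / (m ^ 4 * ((i : ℝ) + 1) ^ 4) := by
      intro i; have : (0:ℝ) < θ / (m ^ 4 * ((i : ℝ) + 1) ^ 4) := by positivity
      linarith
    have hmono : Monotone (fun u : Finset ℕ => ∏ i ∈ u, (1 + θ / (m ^ 4 * ((i : ℝ) + 1) ^ 4))) := by
      intro u v huv
      have h0 : ∀ i ∈ v \ u, (0:ℝ) ≤ 1 + θ / (m ^ 4 * ((i : ℝ) + 1) ^ 4) :=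
        fun i _ => le_trans zero_le_one (h1 i)
      have hone : (1:ℝ) ≤ ∏ i ∈ v \ u, (1 + θ / (m ^ 4 * ((i : ℝ) + 1) ^ 4)) := by
        have h := Finset.prod_le_prod (s := v \ u) (f := fun _ => (1:ℝ))
          (g := fun i : ℕ => 1 + θ / (m ^ 4 * ((i : ℝ) + 1) ^ 4))
          (fun i _ => zero_le_one) (fun i _ => h1 i)
        rwa [Finset.prod_const_one] at h
      have hpos : (0:ℝ) ≤ ∏ i ∈ u, (1 + θ / (m ^ 4 * ((i : ℝ) + 1) ^ 4)) :=
        Finset.prod_nonneg fun i _ => le_trans zero_le_one (h1 i)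
      calc ∏ i ∈ u, (1 + θ / (m ^ 4 * ((i : ℝ) + 1) ^ 4))
          ≤ (∏ i ∈ v \ u, (1 + θ / (m ^ 4 * ((i : ℝ) + 1) ^ 4))) *
            ∏ i ∈ u, (1 + θ / (m ^ 4 * ((i : ℝ) + 1) ^ 4)) :=
            le_mul_of_one_le_left hpos hone
        _ = ∏ i ∈ v, (1 + θ / (m ^ 4 * ((i : ℝ) + 1) ^ 4)) := Finset.prod_sdiff huv
    have TPf : Tendsto (fun n : ℕ => ∏ j ∈ Finset.range n,
        (1 + θ / (m ^ 4 * ((j : ℝ) + 1) ^ 4))) atTop (nhds P) := by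
      simpa [hf] using TP
    have hmseq : Monotone (fun n : ℕ => ∏ j ∈ Finset.range n,
        (1 + θ / (m ^ 4 * ((j : ℝ) + 1) ^ 4))) :=
      fun a c hac => hmono (Finset.range_subset_range.mpr hac)
    have hlub : IsLUB (Set.range fun u : Finset ℕ =>
        ∏ i ∈ u, (1 + θ / (m ^ 4 * ((i : ℝ) + 1) ^ 4))) P := by
      constructor
      · rintro x ⟨u, rfl⟩
        obtain ⟨n, hn⟩ := u.exists_nat_subset_range
        exact le_trans (hmono hn) (hmseq.ge_of_tendsto TPf n)
      · intro x hx
        exact le_of_tendsto TPf (Eventually.of_forall fun n => hx ⟨Finset.range n, rfl⟩)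
    exact tendsto_atTop_isLUB hmono hlub
  · rw [hP, hC, inv_div]
end

section
/- Let α > 1 be real and x ≥ 0, and let ζ denote the Riemann zeta function. Then exp(−ζ(α)x) ≤ ∏_{i=1}^∞ (1 + x/i^α)^{−1} ≤ (1 + ζ(α)x + (ζ(α)−1)x²)^{−1} ≤ (1 + ζ(α)x)^{−1}. In particular, with x = θ/m^α, the success probability of a one-sided infinite regular line network with Rayleigh fading and m-phase TDMA satisfies exp(−ζ(α)θ/m^α) ≤ p_s ≤ 1/(1 + ζ(α)θ/m^α + (ζ(α)−1)θ²/m^{2α}). -/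
open Real

/-- The Riemann zeta function for real argument `α > 1`, `ζ(α) = ∑_{i=1}^∞ i^{-α}`. -/
noncomputable def zetaReal (α : ℝ) : ℝ := ∑' i : ℕ, ((i : ℝ) + 1) ^ (-α)

private lemma aux_log_summable {c : ℕ → ℝ} (hc : ∀ i, 0 ≤ c i) (hs : Summable c) :
    Summable fun i => Real.log (1 + c i) := by
  refine hs.of_nonneg_of_le (fun i => Real.log_nonneg (by linarith [hc i])) (fun i => ?_)
  have := Real.log_le_sub_one_of_pos (show (0:ℝ) < 1 + c i by linarith [hc i])
  linarith

private lemma aux_hasProd {c : ℕ → ℝ} (hc : ∀ i, 0 ≤ c i) (hs : Summable c) :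
    HasProd (fun i => 1 + c i) (Real.exp (∑' i, Real.log (1 + c i))) := by
  have hpos : ∀ i, (0:ℝ) < 1 + c i := fun i => by linarith [hc i]
  have h := (aux_log_summable hc hs).hasSum.rexp
  have h2 : (rexp ∘ fun i => Real.log (1 + c i)) = fun i => 1 + c i :=
    funext fun i => Real.exp_log (hpos i)
  rwa [h2] at h

private lemma aux_finset_le (c : ℕ → ℝ) (hc : ∀ i, 0 ≤ c i) (s : Finset ℕ) :
    1 + ∑ i ∈ s, c i ≤ ∏ i ∈ s, (1 + c i) := by
  classical
  induction s using Finset.cons_induction with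
  | empty => simp
  | cons a s ha ih =>
    rw [Finset.sum_cons, Finset.prod_cons]
    have h1 : (0:ℝ) ≤ ∑ i ∈ s, c i := Finset.sum_nonneg fun i _ => hc i
    nlinarith [hc a, ih]

private lemma aux_one_add_tsum_le_tprod {c : ℕ → ℝ} (hc : ∀ i, 0 ≤ c i) (hs : Summable c) :
    1 + ∑' i, c i ≤ ∏' i, (1 + c i) := by
  have hm := (aux_hasProd hc hs).multipliable
  refine le_of_tendsto_of_tendsto' (Filter.Tendsto.const_add 1 hs.hasSum) hm.hasProd
    (fun s => aux_finset_le c hc s)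

/-- For real `α > 1` and `x ≥ 0`,
`exp (-ζ(α) x) ≤ ∏_{i=1}^∞ (1 + x/i^α)⁻¹ ≤ (1 + ζ(α)x + (ζ(α)-1)x²)⁻¹ ≤ (1 + ζ(α)x)⁻¹`.
With `x = θ/m^α` this bounds the success probability of a one-sided infinite regular line
network with Rayleigh fading and `m`-phase TDMA. -/
theorem tdma_success_probability_bounds (α x : ℝ) (hα : 1 < α) (hx : 0 ≤ x) :
    ∃ P : ℝ, HasProd (fun i : ℕ => (1 + x / ((i : ℝ) + 1) ^ α)⁻¹) P ∧
      Real.exp (-(zetaReal α * x)) ≤ P ∧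
      P ≤ (1 + zetaReal α * x + (zetaReal α - 1) * x ^ 2)⁻¹ ∧
      (1 + zetaReal α * x + (zetaReal α - 1) * x ^ 2)⁻¹ ≤ (1 + zetaReal α * x)⁻¹ := by
  set b : ℕ → ℝ := fun i => ((i : ℝ) + 1) ^ (-α) with hbdef
  have hb0 : ∀ i : ℕ, (0:ℝ) < (i : ℝ) + 1 := fun i => by positivity
  have hbpos : ∀ i, 0 < b i := fun i => Real.rpow_pos_of_pos (hb0 i) _
  have hbsum : Summable b := by
    have h1 : Summable (fun n : ℕ => ((n : ℝ)) ^ (-α)) := by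
      rw [Real.summable_nat_rpow]; linarith
    have h2 := (summable_nat_add_iff (f := fun n : ℕ => ((n : ℝ)) ^ (-α)) 1).2 h1
    refine h2.congr fun i => ?_
    push_cast
    rfl
  set a : ℕ → ℝ := fun i => x * b i with hadef
  have hann : ∀ i, 0 ≤ a i := fun i => mul_nonneg hx (hbpos i).le
  have hasum : Summable a := hbsum.mul_left x
  have hgeq : ∀ i : ℕ, 1 + x / ((i : ℝ) + 1) ^ α = 1 + a i := by
    intro i
    rw [hadef]
    simp only [hbdef]
    rw [Real.rpow_neg (hb0 i).le, div_eq_mul_inv]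
  have hζx : zetaReal α * x = ∑' i, a i := by
    rw [hadef, tsum_mul_left, zetaReal, mul_comm]
  have hζ1 : (1:ℝ) ≤ zetaReal α := by
    have := Summable.le_tsum hbsum 0 (fun j _ => (hbpos j).le)
    simpa [hbdef, Real.one_rpow, zetaReal] using this
  -- log sums
  set L : ℝ := ∑' i, Real.log (1 + a i) with hLdef
  have hg : HasProd (fun i => 1 + a i) (Real.exp L) := aux_hasProd hann hasum
  have hLle : L ≤ zetaReal α * x := by
    rw [hζx, hLdef]
    refine Summable.tsum_le_tsum (fun i => ?_) (aux_log_summable hann hasum) hasum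
    have := Real.log_le_sub_one_of_pos (show (0:ℝ) < 1 + a i by linarith [hann i])
    linarith
  -- shifted sequence
  have hann' : ∀ i, 0 ≤ a (i + 1) := fun i => hann _
  have hasum' : Summable fun i => a (i + 1) := (summable_nat_add_iff 1).2 hasum
  set T : ℝ := ∑' i, a (i + 1) with hTdef
  have hTnn : 0 ≤ T := tsum_nonneg hann'
  have hQ : 1 + T ≤ ∏' i, (1 + a (i + 1)) := aux_one_add_tsum_le_tprod hann' hasum'
  have hsplit : ∏' i, (1 + a i) = (1 + a 0) * ∏' i, (1 + a (i + 1)) :=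
    tprod_eq_zero_mul' (aux_hasProd hann' hasum').multipliable
  have ha0 : a 0 = x := by
    simp [hadef, hbdef, Real.one_rpow]
  have hsum0 : zetaReal α * x = x + T := by
    rw [hζx, Summable.tsum_eq_zero_add hasum, ha0, hTdef]
  have hPg : ∏' i, (1 + a i) = Real.exp L := hg.tprod_eq
  have hDle : 1 + zetaReal α * x + (zetaReal α - 1) * x ^ 2 ≤ Real.exp L := by
    have h1 : (1 + x) * (1 + T) ≤ Real.exp L := by
      rw [← hPg, hsplit, ha0]
      exact mul_le_mul_of_nonneg_left hQ (by linarith)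
    nlinarith [hsum0, h1]
  have hDpos : 0 < 1 + zetaReal α * x + (zetaReal α - 1) * x ^ 2 := by
    nlinarith [hζ1, hx, sq_nonneg x, mul_nonneg (sub_nonneg.2 hζ1) (sq_nonneg x)]
  refine ⟨(Real.exp L)⁻¹, ?_, ?_, ?_, ?_⟩
  · have hcont := (continuousAt_inv₀ (ne_of_gt (Real.exp_pos L))).tendsto.comp hg
    have : HasProd (fun i => (1 + a i)⁻¹) (Real.exp L)⁻¹ := by
      simpa [HasProd, Function.comp_def, ← Finset.prod_inv_distrib] using hcont
    have heq : (fun i : ℕ => (1 + x / ((i : ℝ) + 1) ^ α)⁻¹) = fun i => (1 + a i)⁻¹ :=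
      funext fun i => by rw [hgeq i]
    rw [heq]
    exact this
  · rw [← Real.exp_neg]
    exact Real.exp_le_exp.2 (neg_le_neg hLle)
  · exact inv_anti₀ hDpos hDle
  · refine inv_anti₀ (by nlinarith [hζ1]) ?_
    nlinarith [mul_nonneg (sub_nonneg.2 hζ1) (sq_nonneg x)]
end

section
/- Define E(x) = (2/√π) ∫₀^x exp(−u²) du (the error function). For every x > 0, the strict inequalities 1 − x < 1 − E(√π·x/2) < exp(−x) hold; equivalently, 1 − E(√π·x/2), viewed as a function of x ≥ 0, lies strictly between 1 − x and e^{−x} for x > 0. Consequently, the success probability p_s(p) = 1 − erf(π^{3/2} p √θ / 2) of a non-fading two-dimensional Poisson ALOHA network with α = 4 satisfies 1 − γp < p_s(p) < exp(−γp) with spatial contention γ = π√θ. -/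
open Real

/-- The error function `erf x = (2/√π) ∫₀^x exp (-u²) du`. -/
noncomputable def errorFun (x : ℝ) : ℝ :=
  (2 / Real.sqrt π) * ∫ u in (0 : ℝ)..x, Real.exp (-u ^ 2)

lemma contGauss : Continuous fun u : ℝ => Real.exp (-u ^ 2) := by
  exact Real.continuous_exp.comp (continuous_pow 2).neg

lemma errorFun_hasDerivAt (x : ℝ) :
    HasDerivAt errorFun (2 / Real.sqrt π * Real.exp (-x ^ 2)) x := by
  have h := ((contGauss.integral_hasStrictDerivAt 0 x).hasDerivAt).const_mul (2 / Real.sqrt π)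
  exact h

lemma errorFun_zero : errorFun 0 = 0 := by
  simp [errorFun]

lemma sqrt_pi_pos : 0 < Real.sqrt π := Real.sqrt_pos.mpr Real.pi_pos

lemma errorFun_lt (t : ℝ) (ht : 0 < t) : errorFun t < 2 / Real.sqrt π * t := by
  have h : (∫ u in (0:ℝ)..t, Real.exp (-u ^ 2)) < ∫ u in (0:ℝ)..t, (1:ℝ) := by
    apply intervalIntegral.integral_lt_integral_of_continuousOn_of_le_of_exists_lt ht
      contGauss.continuousOn continuousOn_const
    · intro x hx
      have : -x ^ 2 ≤ 0 := by nlinarith [hx.1]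
      simpa using Real.exp_le_one_iff.mpr this
    · refine ⟨t, by constructor <;> [exact ht.le; exact le_rfl], ?_⟩
      have : -t ^ 2 < 0 := by nlinarith
      simpa using Real.exp_lt_one_iff.mpr this
  have h1 : (∫ u in (0:ℝ)..t, (1:ℝ)) = t := by simp
  rw [h1] at h
  unfold errorFun
  have hc : 0 < 2 / Real.sqrt π := by positivity
  exact (mul_lt_mul_iff_right₀ hc).mpr h

/-- the auxiliary function and its derivative -/
lemma aux_hasDerivAt (x : ℝ) :
    HasDerivAt (fun x => Real.exp (-x) + errorFun (Real.sqrt π * x / 2) - 1)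
      (Real.exp (-(π * x ^ 2 / 4)) - Real.exp (-x)) x := by
  have h1 : HasDerivAt (fun x : ℝ => Real.exp (-x)) (-Real.exp (-x)) x := by
    simpa using (hasDerivAt_neg x).exp
  have hin : HasDerivAt (fun x : ℝ => Real.sqrt π * x / 2) (Real.sqrt π / 2) x := by
    simpa using ((hasDerivAt_id x).const_mul (Real.sqrt π)).div_const 2
  have h2 := (errorFun_hasDerivAt (Real.sqrt π * x / 2)).comp x hin
  have hπ : Real.sqrt π ≠ 0 := ne_of_gt sqrt_pi_pos
  have hsq : Real.sqrt π ^ 2 = π := Real.sq_sqrt Real.pi_pos.le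
  have harg : (Real.sqrt π * x / 2) ^ 2 = π * x ^ 2 / 4 := by
    rw [div_pow, mul_pow, hsq]; norm_num
  have key : 2 / Real.sqrt π * Real.exp (-(Real.sqrt π * x / 2) ^ 2) * (Real.sqrt π / 2)
      = Real.exp (-(π * x ^ 2 / 4)) := by
    rw [harg]; field_simp
  have := (h1.add h2).sub_const 1
  rw [key] at this
  refine this.congr_deriv ?_
  ring

lemma aux_continuous :
    Continuous (fun x => Real.exp (-x) + errorFun (Real.sqrt π * x / 2) - 1) := by
  have : Differentiable ℝ (fun x => Real.exp (-x) + errorFun (Real.sqrt π * x / 2) - 1) :=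
    fun x => (aux_hasDerivAt x).differentiableAt
  exact this.continuous

lemma aux_tendsto :
    Filter.Tendsto (fun x => Real.exp (-x) + errorFun (Real.sqrt π * x / 2) - 1)
      Filter.atTop (nhds 0) := by
  have hexp : Filter.Tendsto (fun x : ℝ => Real.exp (-x)) Filter.atTop (nhds 0) :=
    Real.tendsto_exp_neg_atTop_nhds_zero
  have hint : MeasureTheory.IntegrableOn (fun u : ℝ => Real.exp (-u ^ 2)) (Set.Ioi 0) := by
    have := (integrable_exp_neg_mul_sq (b := 1) one_pos).integrableOn (s := Set.Ioi 0)
    simpa using this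
  have htop : Filter.Tendsto (fun x : ℝ => Real.sqrt π * x / 2) Filter.atTop Filter.atTop := by
    apply Filter.Tendsto.atTop_div_const two_pos
    exact Filter.Tendsto.const_mul_atTop sqrt_pi_pos Filter.tendsto_id
  have h1 := MeasureTheory.intervalIntegral_tendsto_integral_Ioi (0 : ℝ) hint htop
  have hval : (∫ u in Set.Ioi (0:ℝ), Real.exp (-u ^ 2)) = Real.sqrt π / 2 := by
    have := integral_gaussian_Ioi 1
    simpa using this
  rw [hval] at h1
  have h2 : Filter.Tendsto (fun x => errorFun (Real.sqrt π * x / 2)) Filter.atTop (nhds 1) := by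
    have := h1.const_mul (2 / Real.sqrt π)
    have hπ : Real.sqrt π ≠ 0 := ne_of_gt sqrt_pi_pos
    have hone : 2 / Real.sqrt π * (Real.sqrt π / 2) = 1 := by field_simp
    rw [hone] at this
    exact this
  have := (hexp.add h2).sub_const 1
  simpa using this

lemma aux_pos (x : ℝ) (hx : 0 < x) :
    0 < Real.exp (-x) + errorFun (Real.sqrt π * x / 2) - 1 := by
  set f := fun x => Real.exp (-x) + errorFun (Real.sqrt π * x / 2) - 1 with hf
  have hf0 : f 0 = 0 := by simp [hf, errorFun_zero]
  have hmono : StrictMonoOn f (Set.Icc 0 (4 / π)) := by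
    apply strictMonoOn_of_deriv_pos (convex_Icc _ _) aux_continuous.continuousOn
    intro y hy
    rw [interior_Icc] at hy
    rw [(aux_hasDerivAt y).deriv]
    have hlt : π * y ^ 2 / 4 < y := by
      have h1 := hy.1
      have h2 := hy.2
      have hπ := Real.pi_pos
      rw [lt_div_iff₀ hπ] at h2
      nlinarith
    have := Real.exp_lt_exp.mpr (neg_lt_neg hlt)
    linarith
  have hanti : StrictAntiOn f (Set.Ici (4 / π)) := by
    apply strictAntiOn_of_deriv_neg (convex_Ici _) aux_continuous.continuousOn
    intro y hy
    rw [interior_Ici] at hy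
    rw [(aux_hasDerivAt y).deriv]
    have hπ := Real.pi_pos
    have hy0 : 0 < y := lt_trans (by positivity) hy
    have hlt : y < π * y ^ 2 / 4 := by
      rw [Set.mem_Ioi, div_lt_iff₀ hπ] at hy
      rw [lt_div_iff₀ (by norm_num : (0:ℝ) < 4)]
      nlinarith
    have := Real.exp_lt_exp.mpr (neg_lt_neg hlt)
    linarith
  have hπ4 : 0 < 4 / π := by positivity
  rcases le_or_gt x (4 / π) with hle | hgt
  · have := hmono ⟨le_rfl, hπ4.le⟩ ⟨hx.le, hle⟩ hx
    rwa [hf0] at this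
  · have hx1 : f (x + 1) < f x :=
      hanti (Set.mem_Ici.mpr hgt.le) (Set.mem_Ici.mpr (by linarith)) (by linarith)
    have hnn : 0 ≤ f (x + 1) := by
      apply le_of_tendsto aux_tendsto
      filter_upwards [Filter.eventually_ge_atTop (x + 1)] with y hy
      rcases eq_or_lt_of_le hy with h | h
      · exact (congrArg f h).ge
      · exact (hanti (Set.mem_Ici.mpr (by linarith)) (Set.mem_Ici.mpr (by linarith)) h).le
    show 0 < f x
    linarith

/-- For every `x > 0`, `1 - x < 1 - erf (√π x/2) < exp (-x)`. Consequently the success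
probability `p_s(p) = 1 - erf (π^{3/2} p √θ/2)` of a non-fading two-dimensional Poisson
ALOHA network with `α = 4` satisfies `1 - γ p < p_s(p) < exp (-γ p)` with spatial
contention `γ = π√θ`. -/
theorem erf_success_probability_bounds :
    (∀ x : ℝ, 0 < x →
      1 - x < 1 - errorFun (Real.sqrt π * x / 2) ∧
      1 - errorFun (Real.sqrt π * x / 2) < Real.exp (-x)) ∧
    (∀ θ p : ℝ, 0 < θ → 0 < p →
      1 - π * Real.sqrt θ * p < 1 - errorFun (π ^ ((3 : ℝ) / 2) * p * Real.sqrt θ / 2) ∧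
      1 - errorFun (π ^ ((3 : ℝ) / 2) * p * Real.sqrt θ / 2) <
        Real.exp (-(π * Real.sqrt θ * p))) := by
  have main : ∀ x : ℝ, 0 < x →
      1 - x < 1 - errorFun (Real.sqrt π * x / 2) ∧
      1 - errorFun (Real.sqrt π * x / 2) < Real.exp (-x) := by
    intro x hx
    constructor
    · have ht : 0 < Real.sqrt π * x / 2 := by positivity
      have h := errorFun_lt _ ht
      have hπ : Real.sqrt π ≠ 0 := ne_of_gt sqrt_pi_pos
      have : 2 / Real.sqrt π * (Real.sqrt π * x / 2) = x := by field_simp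
      rw [this] at h
      linarith
    · have := aux_pos x hx
      linarith
  refine ⟨main, ?_⟩
  intro θ p hθ hp
  have hx : 0 < π * Real.sqrt θ * p := by positivity
  have harg : π ^ ((3 : ℝ) / 2) * p * Real.sqrt θ / 2
      = Real.sqrt π * (π * Real.sqrt θ * p) / 2 := by
    have h32 : π ^ ((3 : ℝ) / 2) = π * Real.sqrt π := by
      rw [show (3:ℝ)/2 = 1 + 1/2 by norm_num, Real.rpow_add Real.pi_pos, Real.rpow_one,
        ← Real.sqrt_eq_rpow]
    rw [h32]; ring
  rw [harg]
  exact main _ hx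
end

section
/- Let γ > 0. The function f(p) = p(1−p)·exp(−pγ) on the open interval (0,1) attains its maximum uniquely at p_opt = 1/γ + (1 − √(1 + 4/γ²))/2; this p_opt lies in (0, 1/2) and is the root in (0,1) of the quadratic equation p² − p(1 + 2/γ) + 1/γ = 0. Moreover, the maximum value satisfies f(p_opt) ≥ ((1+γ)/(2+γ)²)·exp(−γ/(2+γ)). -/
/-- For `γ > 0`, the half-duplex probabilistic throughput `f(p) = p(1-p) exp (-pγ)` on
`(0,1)` attains its maximum uniquely at
`p_opt = 1/γ + (1 - √(1 + 4/γ²))/2 ∈ (0, 1/2)`, which is the root in `(0,1)` of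
`p² - p(1 + 2/γ) + 1/γ = 0`, and the maximum value satisfies
`f(p_opt) ≥ ((1+γ)/(2+γ)²) exp (-γ/(2+γ))`. -/
theorem half_duplex_throughput_max (γ : ℝ) (hγ : 0 < γ) :
    0 < 1 / γ + (1 - Real.sqrt (1 + 4 / γ ^ 2)) / 2 ∧
    1 / γ + (1 - Real.sqrt (1 + 4 / γ ^ 2)) / 2 < 1 / 2 ∧
    (1 / γ + (1 - Real.sqrt (1 + 4 / γ ^ 2)) / 2) ^ 2 -
        (1 / γ + (1 - Real.sqrt (1 + 4 / γ ^ 2)) / 2) * (1 + 2 / γ) + 1 / γ = 0 ∧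
    (∀ p : ℝ, 0 < p → p < 1 → p ≠ 1 / γ + (1 - Real.sqrt (1 + 4 / γ ^ 2)) / 2 →
      p * (1 - p) * Real.exp (-(p * γ)) <
        (1 / γ + (1 - Real.sqrt (1 + 4 / γ ^ 2)) / 2) *
          (1 - (1 / γ + (1 - Real.sqrt (1 + 4 / γ ^ 2)) / 2)) *
          Real.exp (-((1 / γ + (1 - Real.sqrt (1 + 4 / γ ^ 2)) / 2) * γ))) ∧
    ((1 + γ) / (2 + γ) ^ 2) * Real.exp (-(γ / (2 + γ))) ≤
      (1 / γ + (1 - Real.sqrt (1 + 4 / γ ^ 2)) / 2) *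
        (1 - (1 / γ + (1 - Real.sqrt (1 + 4 / γ ^ 2)) / 2)) *
        Real.exp (-((1 / γ + (1 - Real.sqrt (1 + 4 / γ ^ 2)) / 2) * γ)) := by
  have hγ' : γ ≠ 0 := hγ.ne'
  rw [show (4:ℝ) / γ ^ 2 = 4 * (1/γ)^2 from by ring,
      show (2:ℝ) / γ = 2 * (1/γ) from by ring]
  obtain ⟨t, ht_def⟩ : ∃ t : ℝ, t = 1/γ := ⟨1/γ, rfl⟩
  rw [← ht_def]
  have ht0 : 0 < t := by rw [ht_def]; positivity
  have ht : γ * t = 1 := by rw [ht_def]; field_simp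
  obtain ⟨s, hs_def⟩ : ∃ s : ℝ, s = Real.sqrt (1 + 4 * t ^ 2) := ⟨_, rfl⟩
  rw [← hs_def]
  have hs2 : s ^ 2 = 1 + 4 * t ^ 2 := by rw [hs_def]; exact Real.sq_sqrt (by positivity)
  have hsnn : 0 ≤ s := hs_def ▸ Real.sqrt_nonneg _
  have hs1 : 1 ≤ s := by nlinarith
  have hsa : s < 1 + 2 * t := by nlinarith
  have hsb : 2 * t < s := by nlinarith
  obtain ⟨P, hP⟩ : ∃ P : ℝ, P = t + (1 - s) / 2 := ⟨_, rfl⟩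
  rw [← hP]
  obtain ⟨Q, hQ⟩ : ∃ Q : ℝ, Q = t + (1 + s) / 2 := ⟨_, rfl⟩
  have hP0 : 0 < P := by rw [hP]; linarith
  have hPhalf : P < 1 / 2 := by rw [hP]; linarith
  have hP1 : P < 1 := by linarith
  have hQ1 : 1 < Q := by rw [hQ]; linarith
  have hPQsum : P + Q = 1 + 2 * t := by rw [hP, hQ]; ring
  have hPQprod : P * Q = t := by
    rw [hP, hQ]; linear_combination (-(1:ℝ)/4) * hs2
  have hquad : P ^ 2 - P * (1 + 2 * t) + t = 0 := by
    linear_combination P * hPQsum - hPQprod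
  have hsum' : γ * (P + Q) = γ + 2 := by rw [hPQsum]; linear_combination 2 * ht
  have hprod' : γ * (P * Q) = 1 := by rw [hPQprod]; exact ht
  have hfac : ∀ x : ℝ, γ * x ^ 2 - (γ + 2) * x + 1 = γ * ((x - P) * (x - Q)) := by
    intro x; linear_combination x * hsum' - hprod'
  have hderiv : ∀ x : ℝ, HasDerivAt (fun p : ℝ => p * (1 - p) * Real.exp (-(p * γ)))
      (Real.exp (-(x * γ)) * (γ * x ^ 2 - (γ + 2) * x + 1)) x := by
    intro x
    have h1 : HasDerivAt (fun p : ℝ => p * (1 - p)) (1 - 2 * x) x := by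
      have h : HasDerivAt (fun p : ℝ => p * (1 - p)) _ x := (hasDerivAt_id x).mul ((hasDerivAt_const x (1:ℝ)).sub (hasDerivAt_id x))
      convert h using 1 <;> try simp <;> try ring
    have h2 : HasDerivAt (fun p : ℝ => Real.exp (-(p * γ))) (Real.exp (-(x * γ)) * (-γ)) x := by
      have h := (((hasDerivAt_id x).mul_const γ).neg).exp
      convert h using 1 <;> try simp <;> try ring
    have h : HasDerivAt (fun p : ℝ => p * (1 - p) * Real.exp (-(p * γ))) _ x := h1.mul h2
    convert h using 1; ring
  have hcont : Continuous (fun p : ℝ => p * (1 - p) * Real.exp (-(p * γ))) := by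
    continuity
  have hmono : StrictMonoOn (fun p : ℝ => p * (1 - p) * Real.exp (-(p * γ))) (Set.Icc 0 P) := by
    apply strictMonoOn_of_deriv_pos (convex_Icc 0 P) hcont.continuousOn
    intro x hx
    rw [interior_Icc] at hx
    rw [(hderiv x).deriv, hfac x]
    have hxx : 0 < (x - P) * (x - Q) :=
      mul_pos_of_neg_of_neg (by linarith [hx.2]) (by linarith [hx.2, hP1, hQ1])
    exact mul_pos (Real.exp_pos _) (mul_pos hγ hxx)
  have hanti : StrictAntiOn (fun p : ℝ => p * (1 - p) * Real.exp (-(p * γ))) (Set.Icc P 1) := by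
    apply strictAntiOn_of_deriv_neg (convex_Icc P 1) hcont.continuousOn
    intro x hx
    rw [interior_Icc] at hx
    rw [(hderiv x).deriv, hfac x]
    have hxx : (x - P) * (x - Q) < 0 :=
      mul_neg_of_pos_of_neg (by linarith [hx.1]) (by linarith [hx.2, hQ1])
    exact mul_neg_of_pos_of_neg (Real.exp_pos _) (mul_neg_of_pos_of_neg hγ hxx)
  have hmax : ∀ p : ℝ, 0 < p → p < 1 → p ≠ P →
      p * (1 - p) * Real.exp (-(p * γ)) < P * (1 - P) * Real.exp (-(P * γ)) := by
    intro p hp0 hp1 hne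
    rcases hne.lt_or_gt with h | h
    · simpa using hmono ⟨hp0.le, h.le⟩ ⟨hP0.le, le_refl P⟩ h
    · simpa using hanti ⟨le_refl P, hP1.le⟩ ⟨h.le, hp1.le⟩ h
  refine ⟨hP0, hPhalf, hquad, hmax, ?_⟩
  have h2g : (0:ℝ) < 2 + γ := by linarith
  have hp₀0 : 0 < 1 / (2 + γ) := by positivity
  have hp₀1 : 1 / (2 + γ) < 1 := by rw [div_lt_one h2g]; linarith
  have hval : (1 / (2 + γ)) * (1 - 1 / (2 + γ)) * Real.exp (-((1 / (2 + γ)) * γ)) =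
      ((1 + γ) / (2 + γ) ^ 2) * Real.exp (-(γ / (2 + γ))) := by
    rw [show -((1 / (2 + γ)) * γ) = -(γ / (2 + γ)) from by ring]
    congr 1
    field_simp
    ring
  by_cases hcase : 1 / (2 + γ) = P
  · rw [← hcase, hval]
  · have h := hmax (1 / (2 + γ)) hp₀0 hp₀1 hcase
    rw [hval] at h
    exact h.le
end

section
/- Let β ∈ (0,1). The function f(θ) = θ^{−β} · log(1+θ) on (0,∞) attains a maximum at a unique point θ_opt > 0, and θ_opt is the unique positive solution of β(1+θ)log(1+θ) = θ. (In the paper's notation, with β = d/α for a d-dimensional network with path loss exponent α > d, this θ_opt equals exp(𝒲(−(α/d)e^{−α/d}) + α/d) − 1, where 𝒲 is the principal branch of the Lambert W function.) -/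
open Real

/-- For `β ∈ (0,1)`, the function `f(θ) = θ^{-β} log (1+θ)` on `(0,∞)` attains its maximum
at a unique point `θ_opt > 0`, and `θ_opt` is the unique positive solution of
`β (1+θ) log (1+θ) = θ`. -/
theorem optimal_sir_threshold (β : ℝ) (hβ0 : 0 < β) (hβ1 : β < 1) :
    ∃ θopt : ℝ, 0 < θopt ∧
      (∀ θ : ℝ, 0 < θ → θ ≠ θopt →
        θ ^ (-β) * Real.log (1 + θ) < θopt ^ (-β) * Real.log (1 + θopt)) ∧
      β * (1 + θopt) * Real.log (1 + θopt) = θopt ∧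
      (∀ θ : ℝ, 0 < θ → β * (1 + θ) * Real.log (1 + θ) = θ → θ = θopt) := by
  have hβinv : 1 < 1 / β := (one_lt_div hβ0).mpr hβ1
  set g : ℝ → ℝ := fun θ => β * (1 + θ) * Real.log (1 + θ) - θ with hgdef
  set t1 : ℝ := Real.exp (1 / β - 1) - 1 with ht1def
  set b : ℝ := Real.exp (1 / β) - 1 with hbdef
  have h1t1 : 1 + t1 = Real.exp (1 / β - 1) := by ring
  have h1b : 1 + b = Real.exp (1 / β) := by ring
  have ht1pos : 0 < t1 := by
    rw [ht1def, sub_pos]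
    calc (1 : ℝ) = Real.exp 0 := by simp
      _ < Real.exp (1 / β - 1) := Real.exp_lt_exp.mpr (by linarith)
  have hβb : β * (1 / β) = 1 := by field_simp
  -- g t1 < 0
  have hgt1 : g t1 < 0 := by
    have hlog : Real.log (1 + t1) = 1 / β - 1 := by rw [h1t1, Real.log_exp]
    have hx : (1 / β - 1 : ℝ) ≠ 0 := by linarith
    have hexp : (1 / β - 1) + 1 < Real.exp (1 / β - 1) := Real.add_one_lt_exp hx
    -- so 1/β < exp(1/β-1), hence 1 < β * exp(1/β-1)
    have h2 : 1 < β * Real.exp (1 / β - 1) := by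
      have := mul_lt_mul_of_pos_left (show 1 / β < Real.exp (1 / β - 1) by linarith) hβ0
      rw [hβb] at this
      exact this
    have h5 : β * Real.exp (1 / β - 1) * (1 / β) = Real.exp (1 / β - 1) := by field_simp
    simp only [hgdef, h1t1, ht1def, Real.log_exp]
    nlinarith [h5, h2]
  -- g b > 0
  have hgb : g b = 1 := by
    have hlog : Real.log (1 + b) = 1 / β := by rw [h1b, Real.log_exp]
    have h5 : β * Real.exp (1 / β) * (1 / β) = Real.exp (1 / β) := by field_simp
    simp only [hgdef, h1b, hbdef, Real.log_exp]
    have e : 1 + (Real.exp (1 / β) - 1) = Real.exp (1 / β) := by ring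
    rw [e, Real.log_exp]
    linarith [h5]
  have ht1b : t1 < b := by
    have : Real.exp (1 / β - 1) < Real.exp (1 / β) := Real.exp_lt_exp.mpr (by linarith)
    simpa [ht1def, hbdef] using sub_lt_sub_right this 1
  -- derivative of g
  have hgd : ∀ θ : ℝ, -1 < θ → HasDerivAt g (β * (Real.log (1 + θ) + 1) - 1) θ := by
    intro θ hθ
    have h1θ : (0 : ℝ) < 1 + θ := by linarith
    have h1 : HasDerivAt (fun θ : ℝ => 1 + θ) 1 θ := (hasDerivAt_id θ).const_add 1
    have h2 : HasDerivAt (fun θ : ℝ => Real.log (1 + θ)) (1 / (1 + θ)) θ := by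
      simpa using h1.log h1θ.ne'
    have h3 : HasDerivAt (fun θ : ℝ => β * (1 + θ)) (β * 1) θ := h1.const_mul β
    have h4 := h3.mul h2
    have h5 := h4.sub (hasDerivAt_id θ)
    convert h5 using 1
    iterate 3 rfl
    field_simp
  have hgcont : ∀ s : Set ℝ, (∀ x ∈ s, (-1 : ℝ) < x) → ContinuousOn g s := by
    intro s hs x hx
    exact ((hgd x (hs x hx)).continuousAt).continuousWithinAt
  -- g strictly monotone on Ici t1
  have hgmono : StrictMonoOn g (Set.Ici t1) := by
    apply strictMonoOn_of_deriv_pos (convex_Ici t1)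
    · exact hgcont _ (fun x hx => by have := hx; simp only [Set.mem_Ici] at this; linarith)
    · intro x hx
      rw [interior_Ici] at hx
      have hx1 : -1 < x := by have : t1 < x := hx; linarith
      rw [(hgd x hx1).deriv]
      have hlt : 1 / β - 1 < Real.log (1 + x) := by
        have : Real.log (1 + t1) < Real.log (1 + x) :=
          Real.log_lt_log (by rw [h1t1]; exact Real.exp_pos _) (by linarith [show t1 < x from hx])
        rwa [h1t1, Real.log_exp] at this
      nlinarith
  -- g strictly antitone on Icc 0 t1
  have hganti : StrictAntiOn g (Set.Icc 0 t1) := by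
    apply strictAntiOn_of_deriv_neg (convex_Icc 0 t1)
    · exact hgcont _ (fun x hx => by have := hx.1; linarith)
    · intro x hx
      rw [interior_Icc] at hx
      have hx1 : -1 < x := by linarith [hx.1]
      rw [(hgd x hx1).deriv]
      have hlt : Real.log (1 + x) < 1 / β - 1 := by
        have : Real.log (1 + x) < Real.log (1 + t1) :=
          Real.log_lt_log (by linarith [hx.1]) (by linarith [hx.2])
        rwa [h1t1, Real.log_exp] at this
      nlinarith
  have hg0 : g 0 = 0 := by simp [hgdef]
  -- root of g via IVT
  obtain ⟨θopt, hθmem, hθroot⟩ : ∃ θopt ∈ Set.Ioo t1 b, g θopt = 0 := by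
    have hsub := intermediate_value_Ioo (le_of_lt ht1b)
      (hgcont (Set.Icc t1 b) (fun x hx => by have := hx.1; linarith))
    have h0 : (0 : ℝ) ∈ Set.Ioo (g t1) (g b) := by
      constructor
      · exact hgt1
      · rw [hgb]; norm_num
    obtain ⟨θopt, hmem, heq⟩ := hsub h0
    exact ⟨θopt, hmem, heq⟩
  have hθpos : 0 < θopt := lt_trans ht1pos hθmem.1
  -- sign of g
  have hneg : ∀ θ : ℝ, 0 < θ → θ < θopt → g θ < 0 := by
    intro θ hθ hlt
    rcases le_or_gt θ t1 with h | h
    · have := hganti (Set.mem_Icc.mpr ⟨le_refl 0, le_of_lt ht1pos⟩)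
        (Set.mem_Icc.mpr ⟨le_of_lt hθ, h⟩) hθ
      rwa [hg0] at this
    · have := hgmono (Set.mem_Ici.mpr (le_of_lt h)) (Set.mem_Ici.mpr (le_of_lt hθmem.1)) hlt
      rwa [hθroot] at this
  have hpos : ∀ θ : ℝ, θopt < θ → 0 < g θ := by
    intro θ hlt
    have := hgmono (Set.mem_Ici.mpr (le_of_lt hθmem.1))
      (Set.mem_Ici.mpr (le_of_lt (lt_trans hθmem.1 hlt))) hlt
    rwa [hθroot] at this
  -- the function f
  set f : ℝ → ℝ := fun θ => θ ^ (-β) * Real.log (1 + θ) with hfdef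
  have hfd : ∀ θ : ℝ, 0 < θ →
      HasDerivAt f (θ ^ (-β - 1) * (1 + θ)⁻¹ * (-(g θ))) θ := by
    intro θ hθ
    have h1θ : (0 : ℝ) < 1 + θ := by linarith
    have h1 : HasDerivAt (fun x : ℝ => x ^ (-β)) ((-β) * θ ^ (-β - 1)) θ :=
      Real.hasDerivAt_rpow_const (Or.inl hθ.ne')
    have h2 : HasDerivAt (fun θ : ℝ => Real.log (1 + θ)) (1 / (1 + θ)) θ := by
      simpa using ((hasDerivAt_id θ).const_add 1).log h1θ.ne'
    have h4 := h1.mul h2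
    convert h4 using 1
    iterate 3 rfl
    have key : θ ^ (-β) = θ ^ (-β - 1) * θ := by
      rw [← Real.rpow_add_one hθ.ne' (-β - 1)]
      norm_num
    simp only [hgdef, key]
    field_simp
    ring
  have hfcont : ∀ s : Set ℝ, (∀ x ∈ s, (0 : ℝ) < x) → ContinuousOn f s := by
    intro s hs x hx
    exact ((hfd x (hs x hx)).continuousAt).continuousWithinAt
  have hfmono : StrictMonoOn f (Set.Ioc 0 θopt) := by
    apply strictMonoOn_of_deriv_pos (convex_Ioc 0 θopt)
    · exact hfcont _ (fun x hx => hx.1)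
    · intro x hx
      rw [interior_Ioc] at hx
      rw [(hfd x hx.1).deriv]
      have h1 : (0 : ℝ) < x ^ (-β - 1) := Real.rpow_pos_of_pos hx.1 _
      have h2 : (0 : ℝ) < (1 + x)⁻¹ := inv_pos.mpr (by linarith [hx.1])
      have h3 : 0 < -(g x) := by linarith [hneg x hx.1 hx.2]
      exact mul_pos (mul_pos h1 h2) h3
  have hfanti : StrictAntiOn f (Set.Ici θopt) := by
    apply strictAntiOn_of_deriv_neg (convex_Ici θopt)
    · exact hfcont _ (fun x hx => lt_of_lt_of_le hθpos hx)
    · intro x hx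
      rw [interior_Ici] at hx
      have hxpos : 0 < x := lt_trans hθpos hx
      rw [(hfd x hxpos).deriv]
      have h1 : (0 : ℝ) < x ^ (-β - 1) := Real.rpow_pos_of_pos hxpos _
      have h2 : (0 : ℝ) < (1 + x)⁻¹ := by positivity
      have h3 : -(g x) < 0 := by linarith [hpos x hx]
      exact mul_neg_of_pos_of_neg (mul_pos h1 h2) h3
  refine ⟨θopt, hθpos, ?_, ?_, ?_⟩
  · intro θ hθ hne
    rcases lt_or_gt_of_ne hne with h | h
    · exact hfmono (Set.mem_Ioc.mpr ⟨hθ, le_of_lt h⟩)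
        (Set.mem_Ioc.mpr ⟨hθpos, le_refl _⟩) h
    · exact hfanti (Set.mem_Ici.mpr (le_refl _)) (Set.mem_Ici.mpr (le_of_lt h)) h
  · have := hθroot
    simp only [hgdef] at this
    linarith
  · intro θ hθ heq
    have hgθ : g θ = 0 := by simp only [hgdef]; linarith
    by_contra hne
    rcases lt_or_gt_of_ne hne with h | h
    · exact absurd hgθ (ne_of_lt (hneg θ hθ h))
    · exact absurd hgθ (ne_of_gt (hpos θ h))
end

section
/- For every c > 0, the improper integral c·∫₀^∞ e^{−ct} log(1+t²) dt converges and equals 2·Re( e^{ic} · ∫₁^∞ e^{−icx} x^{−1} dx ), i.e., it equals e^{ic}E₁(ic) + e^{−ic}E₁(−ic) where E₁(z) = ∫₁^∞ e^{−xz} x^{−1} dx is the exponential integral. Consequently, the ergodic capacity of a unit-distance link in a two-dimensional Poisson ALOHA network with Rayleigh fading and α = 4 is C = 2Re{q}cos(c_p) − 2Im{q}sin(c_p) with q = E₁(i c_p) and c_p = pC₂(4) = pπ²/2. -/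
open MeasureTheory Set Filter Real
open scoped Interval


lemma log_sq_bound {c : ℝ} (hc : 0 < c) (t : ℝ) (ht : 0 ≤ t) :
    Real.log (1 + t ^ 2) ≤ 16 / c ^ 2 * Real.exp (c / 2 * t) := by
  have h1 : Real.log (1 + t ^ 2) ≤ t ^ 2 := by
    have := Real.log_le_sub_one_of_pos (show (0:ℝ) < 1 + t ^ 2 by positivity)
    linarith
  have h2 : c * t / 4 ≤ Real.exp (c * t / 4) := by
    linarith [Real.add_one_le_exp (c * t / 4)]
  have h3 : (c * t / 4) * (c * t / 4) ≤ Real.exp (c * t / 4) * Real.exp (c * t / 4) :=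
    mul_self_le_mul_self (by positivity) h2
  have h4 : Real.exp (c * t / 4) * Real.exp (c * t / 4) = Real.exp (c / 2 * t) := by
    rw [← Real.exp_add]; ring_nf
  rw [h4] at h3
  have hc2 : 0 < c ^ 2 := by positivity
  have h5 : t ^ 2 ≤ 16 / c ^ 2 * Real.exp (c / 2 * t) := by
    rw [div_mul_eq_mul_div, le_div_iff₀ hc2]
    nlinarith
  linarith

lemma int_log {c : ℝ} (hc : 0 < c) :
    IntegrableOn (fun t : ℝ => Real.exp (-(c * t)) * Real.log (1 + t ^ 2)) (Ioi 0) := by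
  have hg : IntegrableOn (fun t : ℝ => 16 / c ^ 2 * Real.exp (-(c / 2) * t)) (Ioi 0) :=
    (exp_neg_integrableOn_Ioi 0 (half_pos hc)).const_mul _
  apply Integrable.mono' hg
  · exact (((Real.continuous_exp.comp (continuous_const.mul continuous_id).neg).mul
      ((continuous_const.add (continuous_pow 2)).log
        (fun t => (by positivity : (1:ℝ) + t ^ 2 ≠ 0)))).aestronglyMeasurable).restrict
  · filter_upwards [ae_restrict_mem measurableSet_Ioi] with t ht
    have hlog : 0 ≤ Real.log (1 + t ^ 2) := Real.log_nonneg (by nlinarith)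
    rw [Real.norm_eq_abs, abs_of_nonneg (by positivity)]
    calc Real.exp (-(c * t)) * Real.log (1 + t ^ 2)
        ≤ Real.exp (-(c * t)) * (16 / c ^ 2 * Real.exp (c / 2 * t)) := by
          exact mul_le_mul_of_nonneg_left (log_sq_bound hc t (le_of_lt ht)) (Real.exp_pos _).le
      _ = 16 / c ^ 2 * Real.exp (-(c / 2) * t) := by
          rw [mul_comm (Real.exp _), mul_assoc, ← Real.exp_add]; ring_nf

lemma int_frac {c : ℝ} (hc : 0 < c) :
    IntegrableOn (fun t : ℝ => Real.exp (-(c * t)) * (2 * t / (1 + t ^ 2))) (Ioi 0) := by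
  have hg : IntegrableOn (fun t : ℝ => Real.exp (-c * t)) (Ioi 0) :=
    exp_neg_integrableOn_Ioi 0 hc
  apply Integrable.mono' hg
  · exact (((Real.continuous_exp.comp (continuous_const.mul continuous_id).neg).mul
      ((continuous_const.mul continuous_id).div (continuous_const.add (continuous_pow 2))
        (fun t => (by positivity : (1:ℝ) + t ^ 2 ≠ 0)))).aestronglyMeasurable).restrict
  · filter_upwards [ae_restrict_mem measurableSet_Ioi] with t ht
    have ht' : (0:ℝ) < t := ht
    have h1 : 2 * t / (1 + t ^ 2) ≤ 1 := by
      rw [div_le_one (by positivity)]; nlinarith [sq_nonneg (t - 1)]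
    rw [Real.norm_eq_abs, abs_of_nonneg (by positivity)]
    calc Real.exp (-(c * t)) * (2 * t / (1 + t ^ 2)) ≤ Real.exp (-(c * t)) * 1 :=
          mul_le_mul_of_nonneg_left h1 (Real.exp_pos _).le
      _ = Real.exp (-c * t) := by rw [mul_one, neg_mul]




lemma ibp {c : ℝ} (hc : 0 < c) :
    c * (∫ t in Ioi (0:ℝ), Real.exp (-(c * t)) * Real.log (1 + t ^ 2)) =
      ∫ t in Ioi (0:ℝ), Real.exp (-(c * t)) * (2 * t / (1 + t ^ 2)) := by
  set g : ℝ → ℝ := fun t => -(Real.exp (-(c * t)) * Real.log (1 + t ^ 2)) with hg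
  set g' : ℝ → ℝ := fun t =>
    c * (Real.exp (-(c * t)) * Real.log (1 + t ^ 2)) -
      Real.exp (-(c * t)) * (2 * t / (1 + t ^ 2)) with hg'
  have hderiv : ∀ t ∈ Ioi (0:ℝ), HasDerivAt g (g' t) t := by
    intro t _
    have h1 : HasDerivAt (fun t : ℝ => -(c * t)) (-c) t := by
      simpa using ((hasDerivAt_id t).const_mul (-c))
    have hu : HasDerivAt (fun t : ℝ => Real.exp (-(c * t)))
        (Real.exp (-(c * t)) * (-c)) t := (Real.hasDerivAt_exp _).comp t h1
    have hpos : (0:ℝ) < 1 + t ^ 2 := by positivity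
    have hinner : HasDerivAt (fun t : ℝ => 1 + t ^ 2) (2 * t) t := by
      simpa using ((hasDerivAt_pow 2 t).const_add 1)
    have hv : HasDerivAt (fun t : ℝ => Real.log (1 + t ^ 2)) (2 * t / (1 + t ^ 2)) t :=
      hinner.log (ne_of_gt hpos)
    have := (hu.mul hv).neg
    refine this.congr_deriv ?_
    simp only [hg']
    ring
  have g'int : IntegrableOn g' (Ioi 0) := ((int_log hc).const_mul c).sub (int_frac hc)
  have gtends : Tendsto g atTop (nhds 0) := by
    have htends : Tendsto (fun t : ℝ => Real.exp (-(c * t)) * Real.log (1 + t ^ 2))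
        atTop (nhds 0) := by
      have hb : Tendsto (fun t : ℝ => 16 / c ^ 2 * Real.exp (-(c / 2 * t)))
          atTop (nhds 0) := by
        have h1 : Tendsto (fun t : ℝ => c / 2 * t) atTop atTop :=
          Tendsto.const_mul_atTop (half_pos hc) tendsto_id
        have h2 : Tendsto (fun t : ℝ => Real.exp (-(c / 2 * t))) atTop (nhds 0) :=
          Real.tendsto_exp_atBot.comp (tendsto_neg_atTop_atBot.comp h1)
        simpa using h2.const_mul (16 / c ^ 2)
      apply squeeze_zero' ?_ ?_ hb
      · filter_upwards [eventually_ge_atTop (0:ℝ)] with t ht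
        have : 0 ≤ Real.log (1 + t ^ 2) := Real.log_nonneg (by nlinarith)
        positivity
      · filter_upwards [eventually_ge_atTop (0:ℝ)] with t ht
        calc Real.exp (-(c * t)) * Real.log (1 + t ^ 2)
            ≤ Real.exp (-(c * t)) * (16 / c ^ 2 * Real.exp (c / 2 * t)) :=
              mul_le_mul_of_nonneg_left (log_sq_bound hc t ht) (Real.exp_pos _).le
          _ = 16 / c ^ 2 * Real.exp (-(c / 2 * t)) := by
              rw [mul_comm (Real.exp _), mul_assoc, ← Real.exp_add]; ring_nf
    simpa [hg] using htends.neg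
  have hcont : ContinuousWithinAt g (Ici 0) 0 := by
    apply Continuous.continuousWithinAt
    exact ((Real.continuous_exp.comp (continuous_const.mul continuous_id).neg).mul
      ((continuous_const.add (continuous_pow 2)).log (fun t => (by positivity : (1:ℝ) + t ^ 2 ≠ 0)))).neg
  have key := integral_Ioi_of_hasDerivAt_of_tendsto hcont hderiv g'int gtends
  have hg0 : g 0 = 0 := by simp [hg]
  rw [hg0, sub_zero] at key
  have hsplit : ∫ t in Ioi (0:ℝ), g' t =
      c * (∫ t in Ioi (0:ℝ), Real.exp (-(c * t)) * Real.log (1 + t ^ 2)) -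
        ∫ t in Ioi (0:ℝ), Real.exp (-(c * t)) * (2 * t / (1 + t ^ 2)) := by
    rw [hg']
    rw [integral_sub ((int_log hc).const_mul c) (int_frac hc), MeasureTheory.integral_const_mul]
  rw [hsplit] at key
  linarith


lemma ofReal_exp_norm (a : ℝ) : ‖((Real.exp a : ℝ) : ℂ)‖ = Real.exp a := by
  simp [abs_of_nonneg (Real.exp_pos _).le]

lemma intA {c : ℝ} (hc : 0 < c) :
    IntegrableOn (fun t : ℝ => (Real.exp (-(c * t)) : ℂ) / ((t : ℂ) + Complex.I)) (Ioi 0) := by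
  have hne : ∀ t : ℝ, (t : ℂ) + Complex.I ≠ 0 := by
    intro t h
    have := congrArg Complex.im h
    simp at this
  have hg : IntegrableOn (fun t : ℝ => Real.exp (-c * t)) (Ioi 0) :=
    exp_neg_integrableOn_Ioi 0 hc
  apply Integrable.mono' hg
  · apply Continuous.aestronglyMeasurable ?_ |>.restrict
    exact (Complex.continuous_ofReal.comp
      (Real.continuous_exp.comp (continuous_const.mul continuous_id).neg)).div
      ((Complex.continuous_ofReal.add continuous_const)) hne
  · filter_upwards [ae_restrict_mem measurableSet_Ioi] with t _
    rw [norm_div, ofReal_exp_norm, neg_mul]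
    have h1 : (1:ℝ) ≤ ‖(t : ℂ) + Complex.I‖ := by
      have := Complex.abs_im_le_norm ((t : ℂ) + Complex.I)
      simp only [Complex.add_im, Complex.ofReal_im, Complex.I_im, zero_add] at this
      simpa using this
    calc Real.exp (-(c * t)) / ‖(t : ℂ) + Complex.I‖ ≤ Real.exp (-(c * t)) / 1 := by
          apply div_le_div_of_nonneg_left (Real.exp_pos _).le one_pos h1
      _ = Real.exp (-(c * t)) := div_one _




lemma re_A {c : ℝ} (hc : 0 < c) :
    2 * (∫ t in Ioi (0:ℝ), (Real.exp (-(c * t)) : ℂ) / ((t : ℂ) + Complex.I)).re =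
      ∫ t in Ioi (0:ℝ), Real.exp (-(c * t)) * (2 * t / (1 + t ^ 2)) := by
  have h1 : (∫ t in Ioi (0:ℝ), (Real.exp (-(c * t)) : ℂ) / ((t : ℂ) + Complex.I)).re =
      ∫ t in Ioi (0:ℝ), ((Real.exp (-(c * t)) : ℂ) / ((t : ℂ) + Complex.I)).re :=
    (integral_re (intA hc)).symm
  rw [h1, ← MeasureTheory.integral_const_mul]
  apply setIntegral_congr_fun measurableSet_Ioi
  intro t _
  have hsq : Complex.normSq ((t : ℂ) + Complex.I) = 1 + t ^ 2 := by
    simp [Complex.normSq_apply]; ring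
  simp only [Complex.div_re, hsq, Complex.ofReal_re, Complex.ofReal_im, Complex.add_re,
    Complex.add_im, Complex.I_re, Complex.I_im, zero_add, add_zero]
  field_simp
  ring


lemma rect_identity {c R : ℝ} (hc : 0 < c) (hR : 1 ≤ R) :
    (∫ x in (1:ℝ)..R, Complex.exp (-((c:ℂ) * Complex.I) * x) / x) =
      Complex.exp (-((c:ℂ) * Complex.I)) *
          (∫ x in (0:ℝ)..R, (Real.exp (-(c * x)) : ℂ) / ((x:ℂ) + Complex.I))
        - (∫ x in (0:ℝ)..R,
            Complex.exp (-(c:ℂ) * ((x:ℂ) + R * Complex.I)) / ((x:ℂ) + R * Complex.I))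
        + Complex.I • (∫ y in (1:ℝ)..R,
            Complex.exp (-(c:ℂ) * ((R:ℂ) + y * Complex.I)) / ((R:ℂ) + y * Complex.I)) := by
  set f : ℂ → ℂ := fun z => Complex.exp (-(c:ℂ) * z) / z with hf
  have hdiff : DifferentiableOn ℂ f
      ([[(Complex.I).re, ((R:ℂ) + R * Complex.I).re]] ×ℂ
        [[(Complex.I).im, ((R:ℂ) + R * Complex.I).im]]) := by
    intro z hz
    rw [Complex.mem_reProdIm] at hz
    have him := hz.2
    simp only [Complex.I_im, Complex.add_im, Complex.ofReal_im, Complex.mul_im,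
      Complex.ofReal_re, Complex.I_re, mul_zero, mul_one, zero_add,
      zero_mul, add_zero] at him
    rw [uIcc_of_le hR] at him
    have hzne : z ≠ 0 := by
      intro h
      rw [h] at him
      simp only [Complex.zero_im, mem_Icc] at him
      linarith [him.1]
    exact (((differentiable_id.const_mul (-(c:ℂ))).cexp.differentiableAt.div
      differentiableAt_id hzne).differentiableWithinAt)
  have H := Complex.integral_boundary_rect_eq_zero_of_differentiableOn f Complex.I
    ((R:ℂ) + R * Complex.I) hdiff
  simp only [Complex.I_re, Complex.I_im, Complex.add_re, Complex.add_im, Complex.ofReal_re,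
    Complex.ofReal_im, Complex.mul_re, Complex.mul_im, mul_zero, mul_one, zero_mul, zero_add,
    add_zero, sub_zero, Complex.ofReal_one, one_mul] at H
  have hL : Complex.I • (∫ y in (1:ℝ)..R, f ((0:ℝ) + (y:ℂ) * Complex.I)) =
      ∫ x in (1:ℝ)..R, Complex.exp (-((c:ℂ) * Complex.I) * x) / x := by
    rw [← intervalIntegral.integral_smul]
    apply intervalIntegral.integral_congr
    intro y hy
    rw [uIcc_of_le hR] at hy
    have hy0 : (y:ℂ) ≠ 0 := Complex.ofReal_ne_zero.mpr (by linarith [hy.1])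
    simp only [hf, Complex.ofReal_zero, zero_add, smul_eq_mul]
    rw [show -(c:ℂ) * ((y:ℂ) * Complex.I) = -((c:ℂ) * Complex.I) * (y:ℂ) by ring]
    field_simp
  have hB : (∫ x in (0:ℝ)..R, f ((x:ℂ) + Complex.I)) =
      Complex.exp (-((c:ℂ) * Complex.I)) *
        ∫ x in (0:ℝ)..R, (Real.exp (-(c * x)) : ℂ) / ((x:ℂ) + Complex.I) := by
    rw [← intervalIntegral.integral_const_mul]
    apply intervalIntegral.integral_congr
    intro x _
    simp only [hf]
    rw [show -(c:ℂ) * ((x:ℂ) + Complex.I) = ((-(c * x) : ℝ) : ℂ) + -((c:ℂ) * Complex.I) by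
      push_cast; ring, Complex.exp_add, Complex.ofReal_exp]
    ring
  simp only [Complex.ofReal_zero] at H
  rw [← hL, ← hB, hf]
  linear_combination -H


lemma top_tendsto {c : ℝ} (hc : 0 < c) :
    Tendsto (fun R : ℝ => ∫ x in (0:ℝ)..R,
        Complex.exp (-(c:ℂ) * ((x:ℂ) + R * Complex.I)) / ((x:ℂ) + R * Complex.I))
      atTop (nhds 0) := by
  set M := ∫ x in Ioi (0:ℝ), Real.exp (-(c * x)) with hM
  have hMint : IntegrableOn (fun x : ℝ => Real.exp (-(c * x))) (Ioi 0) := by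
    have := exp_neg_integrableOn_Ioi 0 hc
    simpa [neg_mul] using this
  apply squeeze_zero_norm' (a := fun R => R⁻¹ * M)
  · filter_upwards [eventually_ge_atTop (1:ℝ)] with R hR
    have hR0 : (0:ℝ) < R := lt_of_lt_of_le one_pos hR
    have hne : ∀ x : ℝ, (x:ℂ) + R * Complex.I ≠ 0 := by
      intro x h
      have := congrArg Complex.im h
      simp at this
      linarith
    have hnorm : ∀ x : ℝ, ‖Complex.exp (-(c:ℂ) * ((x:ℂ) + R * Complex.I)) /
        ((x:ℂ) + R * Complex.I)‖ ≤ R⁻¹ * Real.exp (-(c * x)) := by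
      intro x
      rw [norm_div]
      have he : ‖Complex.exp (-(c:ℂ) * ((x:ℂ) + R * Complex.I))‖ = Real.exp (-(c * x)) := by
        rw [Complex.norm_exp]
        congr 1
        simp [Complex.mul_re]
      have hd : R ≤ ‖(x:ℂ) + R * Complex.I‖ := by
        have := Complex.abs_im_le_norm ((x:ℂ) + R * Complex.I)
        simp only [Complex.add_im, Complex.ofReal_im, Complex.mul_im, Complex.ofReal_re,
          Complex.I_im, Complex.I_re, mul_one, mul_zero, zero_add, add_zero] at this
        rw [abs_of_pos hR0] at this
        simpa using this
      rw [he]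
      calc Real.exp (-(c * x)) / ‖(x:ℂ) + R * Complex.I‖ ≤ Real.exp (-(c * x)) / R :=
            div_le_div_of_nonneg_left (Real.exp_pos _).le hR0 hd
        _ = R⁻¹ * Real.exp (-(c * x)) := by rw [div_eq_inv_mul]
    have hcont : Continuous (fun x : ℝ =>
        Complex.exp (-(c:ℂ) * ((x:ℂ) + R * Complex.I)) / ((x:ℂ) + R * Complex.I)) := by
      apply Continuous.div
      · exact Complex.continuous_exp.comp (continuous_const.mul
          (Complex.continuous_ofReal.add continuous_const))
      · exact Complex.continuous_ofReal.add continuous_const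
      · exact hne
    calc ‖∫ x in (0:ℝ)..R, Complex.exp (-(c:ℂ) * ((x:ℂ) + R * Complex.I)) /
            ((x:ℂ) + R * Complex.I)‖
        ≤ ∫ x in (0:ℝ)..R, ‖Complex.exp (-(c:ℂ) * ((x:ℂ) + R * Complex.I)) /
            ((x:ℂ) + R * Complex.I)‖ :=
          intervalIntegral.norm_integral_le_integral_norm hR0.le
      _ ≤ ∫ x in (0:ℝ)..R, R⁻¹ * Real.exp (-(c * x)) := by
          apply intervalIntegral.integral_mono_on hR0.le
          · exact hcont.norm.intervalIntegrable _ _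
          · exact (continuous_const.mul (Real.continuous_exp.comp (continuous_const.mul
              continuous_id).neg)).intervalIntegrable _ _
          · intro x _; exact hnorm x
      _ = R⁻¹ * ∫ x in (0:ℝ)..R, Real.exp (-(c * x)) := by
          rw [intervalIntegral.integral_const_mul]
      _ ≤ R⁻¹ * M := by
          apply mul_le_mul_of_nonneg_left _ (inv_nonneg.mpr hR0.le)
          rw [intervalIntegral.integral_of_le hR0.le]
          apply setIntegral_mono_set hMint
          · filter_upwards with x using (Real.exp_pos _).le
          · exact HasSubset.Subset.eventuallyLE Ioc_subset_Ioi_self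
  · have := tendsto_inv_atTop_zero (𝕜 := ℝ)
    simpa using this.mul_const M

lemma right_tendsto {c : ℝ} (hc : 0 < c) :
    Tendsto (fun R : ℝ => ∫ y in (1:ℝ)..R,
        Complex.exp (-(c:ℂ) * ((R:ℂ) + y * Complex.I)) / ((R:ℂ) + y * Complex.I))
      atTop (nhds 0) := by
  apply squeeze_zero_norm' (a := fun R => R * Real.exp (-(c * R)))
  · filter_upwards [eventually_ge_atTop (1:ℝ)] with R hR
    have hR0 : (0:ℝ) < R := lt_of_lt_of_le one_pos hR
    have key : ∀ y ∈ Ι (1:ℝ) R, ‖Complex.exp (-(c:ℂ) * ((R:ℂ) + y * Complex.I)) /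
        ((R:ℂ) + y * Complex.I)‖ ≤ Real.exp (-(c * R)) := by
      intro y hy
      rw [uIoc_of_le hR] at hy
      have hy1 : (1:ℝ) ≤ y := hy.1.le
      rw [norm_div]
      have he : ‖Complex.exp (-(c:ℂ) * ((R:ℂ) + y * Complex.I))‖ = Real.exp (-(c * R)) := by
        rw [Complex.norm_exp]
        congr 1
        simp [Complex.mul_re]
      have hd : (1:ℝ) ≤ ‖(R:ℂ) + y * Complex.I‖ := by
        have := Complex.abs_im_le_norm ((R:ℂ) + y * Complex.I)
        simp only [Complex.add_im, Complex.ofReal_im, Complex.mul_im, Complex.ofReal_re,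
          Complex.I_im, Complex.I_re, mul_one, mul_zero, zero_add, add_zero] at this
        rw [abs_of_pos (lt_of_lt_of_le one_pos hy1)] at this
        linarith
      rw [he]
      calc Real.exp (-(c * R)) / ‖(R:ℂ) + y * Complex.I‖ ≤ Real.exp (-(c * R)) / 1 :=
            div_le_div_of_nonneg_left (Real.exp_pos _).le one_pos hd
        _ = Real.exp (-(c * R)) := div_one _
    calc ‖∫ y in (1:ℝ)..R, Complex.exp (-(c:ℂ) * ((R:ℂ) + y * Complex.I)) /
            ((R:ℂ) + y * Complex.I)‖
        ≤ Real.exp (-(c * R)) * |R - 1| := intervalIntegral.norm_integral_le_of_norm_le_const key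
      _ ≤ R * Real.exp (-(c * R)) := by
          rw [abs_of_nonneg (by linarith), mul_comm]
          have : R - 1 ≤ R := by linarith
          exact mul_le_mul_of_nonneg_right this (Real.exp_pos _).le
  · have h1 : Tendsto (fun x : ℝ => x * Real.exp (-x)) atTop (nhds 0) := by
      simpa using tendsto_pow_mul_exp_neg_atTop_nhds_zero 1
    have h2 : Tendsto (fun R : ℝ => c * R) atTop atTop :=
      Tendsto.const_mul_atTop hc tendsto_id
    have h3 : Tendsto (fun R : ℝ => (c * R) * Real.exp (-(c * R))) atTop (nhds 0) :=
      h1.comp h2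
    have h4 := h3.const_mul c⁻¹
    simp only [mul_zero] at h4
    apply h4.congr
    intro R
    field_simp

/-- For `c > 0`, the integral `c ∫₀^∞ e^{-ct} log (1+t²) dt` converges and equals
`2 Re (e^{ic} E₁(ic))` where `E₁(ic) = ∫₁^∞ e^{-icx} x⁻¹ dx` (an improper oscillatory
integral), i.e. it equals `2 Re{q} cos c - 2 Im{q} sin c` with `q = E₁(ic)`.
With `c = c_p = p π²/2`, this is the ergodic capacity of a unit-distance link in a
two-dimensional Poisson ALOHA network with Rayleigh fading and `α = 4`. -/
theorem ergodic_capacity_alpha4 (c : ℝ) (hc : 0 < c) :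
    IntegrableOn (fun t : ℝ => Real.exp (-(c * t)) * Real.log (1 + t ^ 2)) (Ioi 0) ∧
    ∃ q : ℂ, Tendsto (fun R : ℝ => ∫ x in (1 : ℝ)..R, Complex.exp (-((c : ℂ) * Complex.I) * x) / x)
        atTop (nhds q) ∧
      c * (∫ t in Ioi (0 : ℝ), Real.exp (-(c * t)) * Real.log (1 + t ^ 2)) =
        2 * (Complex.exp ((c : ℂ) * Complex.I) * q).re ∧
      2 * (Complex.exp ((c : ℂ) * Complex.I) * q).re =
        2 * q.re * Real.cos c - 2 * q.im * Real.sin c := by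
  refine ⟨int_log hc, ?_⟩
  set A : ℂ := ∫ t in Ioi (0:ℝ), (Real.exp (-(c * t)) : ℂ) / ((t : ℂ) + Complex.I) with hA
  set q : ℂ := Complex.exp (-((c:ℂ) * Complex.I)) * A with hq
  have tA : Tendsto (fun R : ℝ => ∫ x in (0:ℝ)..R,
      (Real.exp (-(c * x)) : ℂ) / ((x : ℂ) + Complex.I)) atTop (nhds A) :=
    intervalIntegral_tendsto_integral_Ioi 0 (intA hc) tendsto_id
  have tcomb : Tendsto (fun R : ℝ =>
      Complex.exp (-((c:ℂ) * Complex.I)) *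
          (∫ x in (0:ℝ)..R, (Real.exp (-(c * x)) : ℂ) / ((x:ℂ) + Complex.I))
        - (∫ x in (0:ℝ)..R,
            Complex.exp (-(c:ℂ) * ((x:ℂ) + R * Complex.I)) / ((x:ℂ) + R * Complex.I))
        + Complex.I • (∫ y in (1:ℝ)..R,
            Complex.exp (-(c:ℂ) * ((R:ℂ) + y * Complex.I)) / ((R:ℂ) + y * Complex.I)))
      atTop (nhds (Complex.exp (-((c:ℂ) * Complex.I)) * A - 0 + Complex.I • 0)) :=
    ((tA.const_mul _).sub (top_tendsto hc)).add ((right_tendsto hc).const_smul Complex.I)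
  have hval : Complex.exp (-((c:ℂ) * Complex.I)) * A - 0 + Complex.I • 0 = q := by
    simp [hq]
  rw [hval] at tcomb
  have htendsto : Tendsto (fun R : ℝ =>
      ∫ x in (1:ℝ)..R, Complex.exp (-((c:ℂ) * Complex.I) * x) / x) atTop (nhds q) := by
    apply Tendsto.congr' _ tcomb
    filter_upwards [eventually_ge_atTop (1:ℝ)] with R hR
    exact (rect_identity hc hR).symm
  have hAq : Complex.exp ((c:ℂ) * Complex.I) * q = A := by
    rw [hq, ← mul_assoc, ← Complex.exp_add]
    simp
  refine ⟨q, htendsto, ?_, ?_⟩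
  · rw [hAq, ibp hc, ← re_A hc]
  · rw [hq, ← mul_assoc, ← Complex.exp_add]
    simp only [add_neg_cancel, Complex.exp_zero, one_mul]
    have h1 : (Complex.exp (-((c:ℂ) * Complex.I))).re = Real.cos c := by
      rw [show -((c:ℂ) * Complex.I) = ((-c : ℝ) : ℂ) * Complex.I by push_cast; ring,
        Complex.exp_ofReal_mul_I_re, Real.cos_neg]
    have h2 : (Complex.exp (-((c:ℂ) * Complex.I))).im = -Real.sin c := by
      rw [show -((c:ℂ) * Complex.I) = ((-c : ℝ) : ℂ) * Complex.I by push_cast; ring,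
        Complex.exp_ofReal_mul_I_im, Real.sin_neg]
    rw [Complex.mul_re, Complex.mul_im, h1, h2]
    linear_combination (-2 * A.re) * Real.sin_sq_add_cos_sq c
end
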